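/- arXiv:2011.14534 — 4 statements merged into one kernel-verified Lean document; each statement's English description precedes it below -/
import Mathlib

section
/- Let X be an n-dimensional Lévy process with characteristic exponent Ψ and let d = (d₁,…,dₙ) ∈ [0,∞)^n. Define the process Y(t) := (X₁(d₁t), …, Xₙ(dₙt)) for t ≥ 0. If Y has stationary and independent increments (equivalently, Y is a Lévy process, since Y(0)=0 a.s. and Y has a.s. càdlàg paths automatically), then: (1) the 2n-dimensional process Z(t) := (t·d, Y(t)) is a Lévy process; and (2) for every t ≥ 0, all θ₁, θ₂ ∈ ℝ^n, and every permutation σ of {1,…,n} with d_{σ(1)} ≤ … ≤ d_{σ(n)}, E[exp(i⟨θ₁, t·d⟩ + i⟨θ₂, Y(t)⟩)] = exp( t·( i⟨θ₁, d⟩ + (d ▸ Ψ)_σ(θ₂) ) ). (This expresses that for the deterministic subordinator T(t) = t·d, if X∘T is a Lévy process then (T, X∘T) is equal in law to the weak subordination (T, X⊙T).) -/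
open MeasureTheory ProbabilityTheory Filter Set

noncomputable section

/-- The σ-algebra generated by a stochastic process. -/
def processSigma {Ω E : Type*} [MeasurableSpace E] (X : ℝ → Ω → E) : MeasurableSpace Ω :=
  ⨆ t : ℝ, MeasurableSpace.comap (X t) inferInstance

/-- A process has independent increments if for all `0 = t₀ ≤ t₁ ≤ … ≤ t_k` the
increments `X (t_j) - X (t_{j-1})` are jointly independent. -/
def HasIndepIncrements {Ω E : Type*} [MeasurableSpace Ω] [MeasurableSpace E] [Sub E]
    (P : Measure Ω) (X : ℝ → Ω → E) : Prop :=
  ∀ (k : ℕ) (t : Fin (k + 1) → ℝ), t 0 = 0 → Monotone t →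
    iIndepFun
      (fun i : Fin k => fun ω => X (t i.succ) ω - X (t i.castSucc) ω) P

/-- A process has stationary increments if `X (s+t) - X s` has the law of `X t`. -/
def HasStatIncrements {Ω E : Type*} [MeasurableSpace Ω] [MeasurableSpace E] [Sub E]
    (P : Measure Ω) (X : ℝ → Ω → E) : Prop :=
  ∀ s t : ℝ, 0 ≤ s → 0 ≤ t →
    P.map (fun ω => X (s + t) ω - X s ω) = P.map (X t)

/-- A path `f : ℝ → E` is càdlàg on `[0,∞)`: right-continuous at every `t ≥ 0` and
with left limits at every `t > 0`. -/
def IsCadlagOn {E : Type*} [TopologicalSpace E] (f : ℝ → E) : Prop :=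
  (∀ t : ℝ, 0 ≤ t → ContinuousWithinAt f (Set.Ici t) t) ∧
  (∀ t : ℝ, 0 < t → ∃ l, Tendsto f (nhdsWithin t (Set.Ico 0 t)) (nhds l))

/-- A Lévy process: measurable marginals, starts at `0` a.s., independent and stationary
increments, and a.s. càdlàg sample paths. -/
def IsLevyProcess {Ω E : Type*} [MeasurableSpace Ω] [MeasurableSpace E] [TopologicalSpace E]
    [AddGroup E] (P : Measure Ω) (X : ℝ → Ω → E) : Prop :=
  (∀ t : ℝ, Measurable (X t)) ∧
  (∀ᵐ ω ∂P, X 0 ω = 0) ∧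
  HasIndepIncrements P X ∧
  HasStatIncrements P X ∧
  (∀ᵐ ω ∂P, IsCadlagOn fun t => X t ω)

/-- `Ψ` is a characteristic exponent of the `ℝ^n`-valued process `X`:
`E[exp(i⟨θ, X t⟩)] = exp (t Ψ θ)` for `t ≥ 0`. -/
def IsCharExponent {Ω : Type*} [MeasurableSpace Ω] {n : ℕ} (P : Measure Ω)
    (X : ℝ → Ω → (Fin n → ℝ)) (Ψ : (Fin n → ℝ) → ℂ) : Prop :=
  ∀ t : ℝ, 0 ≤ t → ∀ θ : Fin n → ℝ,
    ∫ ω, Complex.exp (Complex.I * ((∑ j, θ j * X t ω j : ℝ) : ℂ)) ∂P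
      = Complex.exp ((t : ℂ) * Ψ θ)

/-- A subordinator: a Lévy process whose components are a.s. nonnegative and
nondecreasing in time. -/
def IsSubordinator {Ω : Type*} [MeasurableSpace Ω] {n : ℕ} (P : Measure Ω)
    (T : ℝ → Ω → (Fin n → ℝ)) : Prop :=
  IsLevyProcess P T ∧
  ∀ᵐ ω ∂P, ∀ j : Fin n, (∀ t : ℝ, 0 ≤ t → 0 ≤ T t ω j) ∧
    (∀ s t : ℝ, 0 ≤ s → s ≤ t → T s ω j ≤ T t ω j)

/-- The ordered exponent `(s ▸ Ψ)_σ (θ) = ∑ₖ (s_{σ(k)} - s_{σ(k-1)}) Ψ (π_{{σ(k),…,σ(n)}} θ)`,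
where `σ` enumerates the index set `ι` and `π_J` zeroes coordinates outside `J`. -/
def ordExp {ι : Type*} {N : ℕ} (σ : Fin N ≃ ι) (s : ι → ℝ)
    (Ψ : (ι → ℝ) → ℂ) (θ : ι → ℝ) : ℂ :=
  ∑ k : Fin N,
    (((s (σ k) : ℝ) : ℂ) -
        if hk : (k : ℕ) = 0 then 0
        else ((s (σ ⟨(k : ℕ) - 1, by have := k.isLt; omega⟩) : ℝ) : ℂ)) *
      Ψ ({j : ι | ∃ m : Fin N, k ≤ m ∧ σ m = j}.indicator θ)

/-- The ordered exponent `(s ▸ Ψ)(θ)` computed with a canonical sorting permutation. -/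
def ordExpSorted {n : ℕ} (s : Fin n → ℝ) (Ψ : (Fin n → ℝ) → ℂ) (θ : Fin n → ℝ) : ℂ :=
  ordExp (Tuple.sort s) s Ψ θ

section Helpers
variable {Ω : Type*} [MeasurableSpace Ω] {P : Measure Ω} [IsProbabilityMeasure P]

lemma integral_mul_indepFun' {g h : Ω → ℂ} (hg : Measurable g) (hh : Measurable h)
    (hind : IndepFun g h P) :
    ∫ ω, g ω * h ω ∂P = (∫ ω, g ω ∂P) * ∫ ω, h ω ∂P := by
  have hmap : P.map (fun ω => (g ω, h ω)) = (P.map g).prod (P.map h) :=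
    (indepFun_iff_map_prod_eq_prod_map_map hg.aemeasurable hh.aemeasurable).mp hind
  have h1 : IsProbabilityMeasure (P.map g) := Measure.isProbabilityMeasure_map hg.aemeasurable
  have h2 : IsProbabilityMeasure (P.map h) := Measure.isProbabilityMeasure_map hh.aemeasurable
  calc ∫ ω, g ω * h ω ∂P
      = ∫ p : ℂ × ℂ, p.1 * p.2 ∂(P.map (fun ω => (g ω, h ω))) := by
        rw [integral_map (f := fun p : ℂ × ℂ => p.1 * p.2) (hg.prodMk hh).aemeasurable
          (measurable_fst.mul measurable_snd).aestronglyMeasurable]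
    _ = (∫ x, x ∂(P.map g)) * ∫ y, y ∂(P.map h) := by
        rw [hmap]; exact integral_prod_mul (fun x : ℂ => x) (fun y : ℂ => y)
    _ = (∫ ω, g ω ∂P) * ∫ ω, h ω ∂P := by
        rw [integral_map (f := fun x : ℂ => x) hg.aemeasurable aestronglyMeasurable_id,
          integral_map (f := fun x : ℂ => x) hh.aemeasurable aestronglyMeasurable_id]

lemma integral_prod_indepFun' {k : ℕ} {f : Fin k → Ω → ℂ}
    (hind : iIndepFun f P) (hmeas : ∀ i, Measurable (f i)) :
    ∫ ω, ∏ i, f i ω ∂P = ∏ i, ∫ ω, f i ω ∂P := by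
  classical
  have H : ∀ s : Finset (Fin k), ∫ ω, ∏ i ∈ s, f i ω ∂P = ∏ i ∈ s, ∫ ω, f i ω ∂P := by
    intro s
    induction s using Finset.induction_on with
    | empty => simp
    | @insert a s ha ih =>
      have hprod : Measurable (fun ω => ∏ i ∈ s, f i ω) :=
        Finset.measurable_prod _ fun i _ => hmeas i
      have hind2 : IndepFun (fun ω => ∏ i ∈ s, f i ω) (f a) P := by
        have := hind.indepFun_finsetProd_of_notMem hmeas ha
        have he : (∏ j ∈ s, f j) = fun ω => ∏ i ∈ s, f i ω := by
          funext ω; simp [Finset.prod_apply]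
        rwa [he] at this
      simp only [Finset.prod_insert ha]
      rw [show (∫ ω, f a ω * ∏ i ∈ s, f i ω ∂P)
          = (∫ ω, f a ω ∂P) * ∫ ω, ∏ i ∈ s, f i ω ∂P from
        integral_mul_indepFun' (hmeas a) hprod hind2.symm, ih]
  exact H Finset.univ

end Helpers

/-- for a Lévy process `X` with characteristic exponent `Ψ` and a deterministic
subordinator `T(t) = t·d`, if `Y(t) = (X₁(d₁t),…,Xₙ(dₙt))` has stationary and independent
increments, then `Z(t) = (t·d, Y(t))` is a Lévy process and has the characteristic function of
the weak subordination `(T, X⊙T)`. -/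
theorem strong_eq_weak_deterministic_subordinator {Ω : Type*} [MeasurableSpace Ω]
    (P : Measure Ω) [IsProbabilityMeasure P] {n : ℕ}
    (X : ℝ → Ω → (Fin n → ℝ)) (Ψ : (Fin n → ℝ) → ℂ)
    (hX : IsLevyProcess P X) (hΨ : IsCharExponent P X Ψ)
    (d : Fin n → ℝ) (hd : ∀ j, 0 ≤ d j)
    (Y : ℝ → Ω → (Fin n → ℝ)) (hY : ∀ t ω j, Y t ω j = X (d j * t) ω j)
    (hYstat : HasStatIncrements P Y) (hYind : HasIndepIncrements P Y) :
    IsLevyProcess P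
      (fun t ω => (((fun j => t * d j), Y t ω) : (Fin n → ℝ) × (Fin n → ℝ))) ∧
    (∀ t : ℝ, 0 ≤ t → ∀ θ₁ θ₂ : Fin n → ℝ, ∀ σ : Equiv.Perm (Fin n),
      Monotone (fun k => d (σ k)) →
      ∫ ω, Complex.exp (Complex.I * ((∑ j, θ₁ j * (t * d j) : ℝ) : ℂ)
            + Complex.I * ((∑ j, θ₂ j * Y t ω j : ℝ) : ℂ)) ∂P
        = Complex.exp ((t : ℂ) *
            (Complex.I * ((∑ j, θ₁ j * d j : ℝ) : ℂ) + ordExp σ d Ψ θ₂))) := by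
  obtain ⟨hXmeas, hX0, hXind, hXstat, hXcad⟩ := hX
  have hYeq : ∀ r : ℝ, Y r = fun ω j => X (d j * r) ω j := by
    intro r; funext ω j; exact hY r ω j
  have hYmeas : ∀ r : ℝ, Measurable (Y r) := by
    intro r; rw [hYeq]
    exact measurable_pi_lambda _ fun j => (measurable_pi_apply j).comp (hXmeas (d j * r))
  constructor
  · refine ⟨?_, ?_, ?_, ?_, ?_⟩
    · intro t; exact measurable_const.prodMk (hYmeas t)
    · filter_upwards [hX0] with ω hω
      have h1 : (fun j => (0:ℝ) * d j) = 0 := by funext j; simp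
      have h2 : Y 0 ω = 0 := by
        funext j; rw [hY]
        simpa [mul_zero] using congrFun hω j
      simp only [h1, h2, Prod.mk_eq_zero, and_self]
    · intro k ts h0 hmono
      have hcomp := (hYind k ts h0 hmono).comp
        (fun i => fun y : Fin n → ℝ =>
          (((fun j => ts i.succ * d j - ts i.castSucc * d j) : Fin n → ℝ), y))
        (fun i => measurable_const.prodMk measurable_id)
      have heq : (fun (i : Fin k) (ω : Ω) =>
            (((fun j => ts i.succ * d j) : Fin n → ℝ), Y (ts i.succ) ω)
              - (((fun j => ts i.castSucc * d j) : Fin n → ℝ), Y (ts i.castSucc) ω))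
          = fun i => (fun y : Fin n → ℝ =>
              (((fun j => ts i.succ * d j - ts i.castSucc * d j) : Fin n → ℝ), y))
            ∘ (fun ω => Y (ts i.succ) ω - Y (ts i.castSucc) ω) := by
        funext i ω
        rfl
      exact heq ▸ hcomp
    · intro s u hs hu
      have e1 : (fun ω => (((fun j => (s+u) * d j) : Fin n → ℝ), Y (s+u) ω)
            - (((fun j => s * d j) : Fin n → ℝ), Y s ω))
          = (fun y : Fin n → ℝ => (((fun j => u * d j) : Fin n → ℝ), y))
            ∘ (fun ω => Y (s+u) ω - Y s ω) := by
        funext ω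
        rw [Prod.mk_sub_mk]
        refine congrArg (fun c => (c, _)) ?_
        funext j
        show (s+u) * d j - s * d j = u * d j
        ring
      have hgm : Measurable (fun y : Fin n → ℝ =>
          (((fun j => u * d j) : Fin n → ℝ), y)) := measurable_const.prodMk measurable_id
      rw [e1, ← Measure.map_map hgm (show Measurable (fun ω => Y (s+u) ω - Y s ω) from (hYmeas _).sub (hYmeas _)), hYstat s u hs hu,
        Measure.map_map hgm (hYmeas u)]
      rfl
    · filter_upwards [hXcad] with ω hcad
      constructor
      · intro t ht
        apply ContinuousWithinAt.prodMk
        · exact (continuous_pi fun j =>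
            continuous_id.mul continuous_const).continuousWithinAt
        · have hYrw : (fun u => Y u ω) = fun u => (fun j => X (d j * u) ω j) := by
            funext u; funext j; exact hY u ω j
          rw [hYrw]
          refine continuousWithinAt_pi.mpr fun j => ?_
          have h1 : ContinuousWithinAt (fun u => X u ω j) (Ici (d j * t)) (d j * t) :=
            (continuous_apply j).continuousAt.comp_continuousWithinAt
              (hcad.1 _ (mul_nonneg (hd j) ht))
          have h2 : ContinuousWithinAt (fun u : ℝ => d j * u) (Ici t) t :=
            (continuous_const.mul continuous_id).continuousWithinAt
          have h3 : MapsTo (fun u : ℝ => d j * u) (Ici t) (Ici (d j * t)) :=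
            fun u hu => mul_le_mul_of_nonneg_left hu (hd j)
          exact h1.comp h2 h3
      · intro t ht
        have hmapsto : ∀ j : Fin n, 0 < d j →
            Tendsto (fun u : ℝ => d j * u) (nhdsWithin t (Ico 0 t))
              (nhdsWithin (d j * t) (Ico 0 (d j * t))) := by
          intro j hj
          refine tendsto_nhdsWithin_iff.mpr ⟨?_, ?_⟩
          · exact ((continuous_const.mul continuous_id).tendsto t).mono_left
              nhdsWithin_le_nhds
          · exact eventually_mem_nhdsWithin.mono fun u hu =>
              ⟨mul_nonneg (hd j) hu.1, (mul_lt_mul_iff_right₀ hj).mpr hu.2⟩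
        choose L hL using fun (j : Fin n) (hj : 0 < d j) =>
          hcad.2 (d j * t) (mul_pos hj ht)
        classical
        refine ⟨((fun j => t * d j),
          fun j => if hj : 0 < d j then L j hj j else X 0 ω j), ?_⟩
        apply Tendsto.prodMk_nhds
        · exact ((continuous_pi fun j =>
            continuous_id.mul continuous_const).tendsto t).mono_left nhdsWithin_le_nhds
        · have hYrw : (fun u => Y u ω) = fun u => (fun j => X (d j * u) ω j) := by
            funext u; funext j; exact hY u ω j
          rw [hYrw]
          refine tendsto_pi_nhds.mpr fun j => ?_
          by_cases hj : 0 < d j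
          · rw [dif_pos hj]
            have hXj : Tendsto (fun u => X u ω j)
                (nhdsWithin (d j * t) (Ico 0 (d j * t))) (nhds (L j hj j)) :=
              ((continuous_apply j).tendsto _).comp (hL j hj)
            exact hXj.comp (hmapsto j hj)
          · rw [dif_neg hj]
            have hdj : d j = 0 := le_antisymm (not_lt.mp hj) (hd j)
            have : (fun u : ℝ => X (d j * u) ω j) = fun _ => X 0 ω j := by
              funext u; rw [hdj, zero_mul]
            rw [this]
            exact tendsto_const_nhds
  · intro t ht θ₁ θ₂ σ hσ
    classical
    set s' : Fin (n+1) → ℝ := fun i =>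
      if h : (i : ℕ) = 0 then 0
      else d (σ ⟨(i:ℕ) - 1, by have := i.isLt; omega⟩) * t with hs'
    have hs'0 : s' 0 = 0 := by simp [hs']
    have hs'succ : ∀ k : Fin n, s' k.succ = d (σ k) * t := by
      intro k
      have hv : ((k.succ : Fin (n+1)) : ℕ) = (k:ℕ) + 1 := rfl
      simp only [hs', hv]
      rw [dif_neg (by omega)]
      congr 2
    have hs'cast : ∀ k : Fin n, s' k.castSucc =
        if h : (k:ℕ) = 0 then 0
        else d (σ ⟨(k:ℕ) - 1, by have := k.isLt; omega⟩) * t := by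
      intro k
      simp only [hs', Fin.coe_castSucc]
    have hs'nonneg : ∀ i, 0 ≤ s' i := by
      intro i
      simp only [hs']
      split
      · exact le_refl 0
      · exact mul_nonneg (hd _) ht
    have hs'mono : Monotone s' := by
      intro i j hij
      by_cases hi : (i:ℕ) = 0
      · have : s' i = 0 := by simp only [hs']; rw [dif_pos hi]
        rw [this]; exact hs'nonneg j
      · have hj : ¬ ((j:ℕ) = 0) := by
          have := (Fin.le_iff_val_le_val).mp hij; omega
        simp only [hs', dif_neg hi, dif_neg hj]
        refine mul_le_mul_of_nonneg_right (hσ ?_) ht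
        have := (Fin.le_iff_val_le_val).mp hij
        exact Fin.mk_le_mk.mpr (by omega)
    set W : Fin n → Ω → (Fin n → ℝ) :=
      fun k ω => X (s' k.succ) ω - X (s' k.castSucc) ω with hWdef
    have hWmeas : ∀ k, Measurable (W k) := fun k => (hXmeas _).sub (hXmeas _)
    have hWind : iIndepFun W P := hXind n s' hs'0 hs'mono
    have hWlaw : ∀ k : Fin n, P.map (W k) = P.map (X (s' k.succ - s' k.castSucc)) := by
      intro k
      have h1 : (0:ℝ) ≤ s' k.castSucc := hs'nonneg _
      have h2 : (0:ℝ) ≤ s' k.succ - s' k.castSucc :=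
        sub_nonneg.mpr (hs'mono (Fin.castSucc_le_succ k))
      have hst := hXstat (s' k.castSucc) (s' k.succ - s' k.castSucc) h1 h2
      have e : s' k.castSucc + (s' k.succ - s' k.castSucc) = s' k.succ := by ring
      rw [e] at hst
      exact hst
    set Θ : Fin n → (Fin n → ℝ) :=
      fun k => ({j : Fin n | ∃ m : Fin n, k ≤ m ∧ σ m = j} : Set (Fin n)).indicator θ₂
      with hΘdef
    set g : Fin n → (Fin n → ℝ) → ℂ :=
      fun k x => Complex.exp (Complex.I * ((∑ j, Θ k j * x j : ℝ) : ℂ)) with hgdef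
    have hgmeas : ∀ k, Measurable (g k) := by
      intro k
      apply Complex.measurable_exp.comp
      apply Measurable.const_mul
      exact Complex.measurable_ofReal.comp
        (Finset.measurable_sum _ fun j _ => (measurable_pi_apply j).const_mul _)
    have hΘσ : ∀ k m : Fin n, Θ k (σ m) = if k ≤ m then θ₂ (σ m) else 0 := by
      intro k m
      simp only [hΘdef]
      by_cases h : k ≤ m
      · have hmem : σ m ∈ {j : Fin n | ∃ m' : Fin n, k ≤ m' ∧ σ m' = j} := ⟨m, h, rfl⟩
        rw [if_pos h]
        exact Set.indicator_of_mem hmem θ₂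
      · rw [if_neg h]
        refine Set.indicator_of_notMem ?_ θ₂
        rintro ⟨m', hm', hσm'⟩
        exact h (by rwa [σ.injective hσm'] at hm')
    have key : ∀ᵐ ω ∂P, ∀ (j m : Fin n),
        X (s' m.succ) ω j = ∑ k : Fin n, if k ≤ m then W k ω j else 0 := by
      filter_upwards [hX0] with ω hω0
      intro j m
      have main : ∀ (N : ℕ) (hN : N < n),
          X (s' (Fin.succ ⟨N, hN⟩)) ω j
            = ∑ k : Fin n, if (k:ℕ) ≤ N then W k ω j else 0 := by
        intro N
        induction N with
        | zero =>
          intro hN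
          have hRHS : (∑ k : Fin n, if (k:ℕ) ≤ 0 then W k ω j else 0)
              = W ⟨0, hN⟩ ω j := by
            rw [Finset.sum_eq_single (⟨0, hN⟩ : Fin n)]
            · simp
            · intro b _ hb
              rw [if_neg]
              intro hb0
              exact hb (Fin.ext (show (b:ℕ) = 0 by omega))
            · simp
          rw [hRHS]
          have hc : ((⟨0, hN⟩ : Fin n).castSucc) = (0 : Fin (n+1)) := Fin.ext (by simp)
          show X (s' (Fin.succ ⟨0, hN⟩)) ω j
            = X (s' (Fin.succ ⟨0, hN⟩)) ω j - X (s' ((⟨0, hN⟩ : Fin n).castSucc)) ω j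
          rw [hc, hs'0]
          have : X 0 ω j = 0 := by rw [hω0]; rfl
          rw [this, sub_zero]
        | succ N ihN =>
          intro hN
          have hN' : N < n := by omega
          have ih := ihN hN'
          have hsplit : ∀ k : Fin n, (if (k:ℕ) ≤ N+1 then W k ω j else 0)
              = (if (k:ℕ) ≤ N then W k ω j else 0)
                + (if k = ⟨N+1, hN⟩ then W k ω j else 0) := by
            intro k
            by_cases h1 : (k:ℕ) ≤ N
            · rw [if_pos (by omega : (k:ℕ) ≤ N+1), if_pos h1, if_neg, add_zero]
              intro hk
              have := congrArg Fin.val hk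
              simp at this
              omega
            · by_cases h2 : k = ⟨N+1, hN⟩
              · have hv : (k:ℕ) = N+1 := by rw [h2]
                rw [if_pos (by omega : (k:ℕ) ≤ N+1), if_neg h1, if_pos h2, zero_add]
              · have hv : (k:ℕ) ≠ N+1 := by
                  intro hc; exact h2 (Fin.ext hc)
                rw [if_neg (by omega), if_neg h1, if_neg h2, add_zero]
          rw [Finset.sum_congr rfl (fun k _ => hsplit k), Finset.sum_add_distrib, ← ih]
          have hsingle : (∑ k : Fin n, if k = ⟨N+1, hN⟩ then W k ω j else 0)
              = W ⟨N+1, hN⟩ ω j := by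
            rw [Finset.sum_eq_single (⟨N+1, hN⟩ : Fin n)]
            · simp
            · intro b _ hb; rw [if_neg hb]
            · simp
          rw [hsingle]
          have hcs : ((⟨N+1, hN⟩ : Fin n).castSucc) = Fin.succ (⟨N, hN'⟩ : Fin n) :=
            Fin.ext (by simp)
          show X (s' (Fin.succ ⟨N+1, hN⟩)) ω j
            = X (s' (Fin.succ ⟨N, hN'⟩)) ω j
              + (X (s' (Fin.succ ⟨N+1, hN⟩)) ω j
                - X (s' ((⟨N+1, hN⟩ : Fin n).castSucc)) ω j)
          rw [hcs]
          ring
      have := main (m:ℕ) m.isLt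
      simp only [Fin.eta] at this
      rw [this]
      refine Finset.sum_congr rfl fun k _ => ?_
      congr 1
    have hAE : ∀ᵐ ω ∂P,
        Complex.exp (Complex.I * ((∑ j, θ₂ j * Y t ω j : ℝ) : ℂ))
          = ∏ k : Fin n, g k (W k ω) := by
      filter_upwards [key] with ω hkey
      have hsum : (∑ j, θ₂ j * Y t ω j) = ∑ k : Fin n, ∑ j, Θ k j * W k ω j := by
        have hL : (∑ j, θ₂ j * Y t ω j)
            = ∑ m : Fin n, θ₂ (σ m) * X (s' m.succ) ω (σ m) := by
          rw [← Equiv.sum_comp σ (fun j => θ₂ j * Y t ω j)]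
          refine Finset.sum_congr rfl fun m _ => ?_
          rw [hY, hs'succ]
        have hR : ∀ k : Fin n, (∑ j, Θ k j * W k ω j)
            = ∑ m, if k ≤ m then θ₂ (σ m) * W k ω (σ m) else 0 := by
          intro k
          rw [← Equiv.sum_comp σ (fun j => Θ k j * W k ω j)]
          refine Finset.sum_congr rfl fun m _ => ?_
          rw [hΘσ]
          split <;> simp
        rw [hL]
        rw [Finset.sum_congr rfl (fun k (_ : k ∈ Finset.univ) => hR k), Finset.sum_comm]
        refine Finset.sum_congr rfl fun m _ => ?_
        rw [hkey (σ m) m, Finset.mul_sum]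
        refine Finset.sum_congr rfl fun k _ => ?_
        split <;> simp
      rw [hsum, Complex.ofReal_sum, Finset.mul_sum, Complex.exp_sum]
    have hint : ∫ ω, Complex.exp (Complex.I * ((∑ j, θ₂ j * Y t ω j : ℝ) : ℂ)) ∂P
        = ∏ k, ∫ ω, g k (W k ω) ∂P := by
      rw [integral_congr_ae hAE]
      exact integral_prod_indepFun' (hWind.comp g hgmeas)
        (fun k => (hgmeas k).comp (hWmeas k))
    have hfactor : ∀ k : Fin n, (∫ ω, g k (W k ω) ∂P)
        = Complex.exp (((s' k.succ - s' k.castSucc : ℝ) : ℂ) * Ψ (Θ k)) := by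
      intro k
      have hΔ : (0:ℝ) ≤ s' k.succ - s' k.castSucc :=
        sub_nonneg.mpr (hs'mono (Fin.castSucc_le_succ k))
      calc (∫ ω, g k (W k ω) ∂P) = ∫ x, g k x ∂(P.map (W k)) :=
            (integral_map (hWmeas k).aemeasurable
              (hgmeas k).aestronglyMeasurable).symm
        _ = ∫ x, g k x ∂(P.map (X (s' k.succ - s' k.castSucc))) := by rw [hWlaw k]
        _ = ∫ ω, g k (X (s' k.succ - s' k.castSucc) ω) ∂P :=
            integral_map (hXmeas _).aemeasurable (hgmeas k).aestronglyMeasurable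
        _ = Complex.exp (((s' k.succ - s' k.castSucc : ℝ) : ℂ) * Ψ (Θ k)) :=
            hΨ _ hΔ (Θ k)
    have hprodexp : (∏ k : Fin n,
          Complex.exp (((s' k.succ - s' k.castSucc : ℝ) : ℂ) * Ψ (Θ k)))
        = Complex.exp ((t:ℂ) * ordExp σ d Ψ θ₂) := by
      rw [← Complex.exp_sum]
      congr 1
      rw [ordExp, Finset.mul_sum]
      refine Finset.sum_congr rfl fun k _ => ?_
      rw [hs'succ k, hs'cast k]
      simp only [hΘdef]
      by_cases hk : (k:ℕ) = 0
      · rw [dif_pos hk, dif_pos hk]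
        push_cast
        ring
      · rw [dif_neg hk, dif_neg hk]
        push_cast
        ring
    have hconst : (Complex.I * ((∑ j, θ₁ j * (t * d j) : ℝ) : ℂ))
        = (t:ℂ) * (Complex.I * ((∑ j, θ₁ j * d j : ℝ) : ℂ)) := by
      have e : (∑ j, θ₁ j * (t * d j)) = t * ∑ j, θ₁ j * d j := by
        rw [Finset.mul_sum]
        exact Finset.sum_congr rfl fun j _ => by ring
      rw [e]
      push_cast
      ring
    calc ∫ ω, Complex.exp (Complex.I * ((∑ j, θ₁ j * (t * d j) : ℝ) : ℂ)
            + Complex.I * ((∑ j, θ₂ j * Y t ω j : ℝ) : ℂ)) ∂P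
        = ∫ ω, Complex.exp (Complex.I * ((∑ j, θ₁ j * (t * d j) : ℝ) : ℂ))
            * Complex.exp (Complex.I * ((∑ j, θ₂ j * Y t ω j : ℝ) : ℂ)) ∂P := by
          simp only [Complex.exp_add]
      _ = Complex.exp (Complex.I * ((∑ j, θ₁ j * (t * d j) : ℝ) : ℂ))
            * ∫ ω, Complex.exp (Complex.I * ((∑ j, θ₂ j * Y t ω j : ℝ) : ℂ)) ∂P :=
          integral_const_mul _ _
      _ = Complex.exp ((t:ℂ) * (Complex.I * ((∑ j, θ₁ j * d j : ℝ) : ℂ)))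
            * Complex.exp ((t:ℂ) * ordExp σ d Ψ θ₂) := by
          rw [hconst, hint]
          congr 1
          rw [Finset.prod_congr rfl (fun k (_ : k ∈ Finset.univ) => hfactor k), hprodexp]
      _ = Complex.exp ((t : ℂ) *
            (Complex.I * ((∑ j, θ₁ j * d j : ℝ) : ℂ) + ordExp σ d Ψ θ₂)) := by
          rw [← Complex.exp_add, mul_add]

end
end

section
/- Let X be an n-dimensional Lévy process with characteristic exponent Ψ and let T be an n-dimensional subordinator independent of X. Define the strong subordination (X∘T)(t) := (X₁(T₁(t)), …, Xₙ(Tₙ(t))). Then for every t ≥ 0 and all θ₁, θ₂ ∈ ℝ^n, E[ exp( i⟨θ₁, T(t)⟩ + i⟨θ₂, (X∘T)(t)⟩ ) ] = E[ exp( i⟨θ₁, T(t)⟩ + (T(t) ▸ Ψ)(θ₂) ) ], where for each ω the quantity (T(t)(ω) ▸ Ψ)(θ₂) := (T(t)(ω) ▸ Ψ)_σ(θ₂) is computed with any permutation σ of {1,…,n} sorting the components of T(t)(ω) (the value does not depend on the choice of σ, and the integrand on the right-hand side is bounded in modulus by 1 since Re Ψ ≤ 0). -/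
open MeasureTheory ProbabilityTheory Filter Set
open Topology

noncomputable section

section Aux


variable {Ω : Type*} [MeasurableSpace Ω] {P : Measure Ω} [IsProbabilityMeasure P]

lemma ProbabilityTheory.IndepFun.integral_mul_complex {f g : Ω → ℂ} (h : IndepFun f g P)
    (hf : Integrable f P) (hg : Integrable g P) (hfg : Integrable (fun ω => f ω * g ω) P) :
    ∫ ω, f ω * g ω ∂P = (∫ ω, f ω ∂P) * ∫ ω, g ω ∂P := by
  have hrr : IndepFun (fun ω => (f ω).re) (fun ω => (g ω).re) P :=
    h.comp Complex.measurable_re Complex.measurable_re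
  have hri : IndepFun (fun ω => (f ω).re) (fun ω => (g ω).im) P :=
    h.comp Complex.measurable_re Complex.measurable_im
  have hir : IndepFun (fun ω => (f ω).im) (fun ω => (g ω).re) P :=
    h.comp Complex.measurable_im Complex.measurable_re
  have hii : IndepFun (fun ω => (f ω).im) (fun ω => (g ω).im) P :=
    h.comp Complex.measurable_im Complex.measurable_im
  have h1 : Integrable (fun ω => (f ω).re) P := hf.re
  have h2 : Integrable (fun ω => (f ω).im) P := hf.im
  have h3 : Integrable (fun ω => (g ω).re) P := hg.re
  have h4 : Integrable (fun ω => (g ω).im) P := hg.im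
  have e1 : ∫ ω, (f ω).re * (g ω).re ∂P = (∫ ω, (f ω).re ∂P) * ∫ ω, (g ω).re ∂P :=
    hrr.integral_fun_mul_eq_mul_integral h1.aestronglyMeasurable h3.aestronglyMeasurable
  have e2 : ∫ ω, (f ω).im * (g ω).im ∂P = (∫ ω, (f ω).im ∂P) * ∫ ω, (g ω).im ∂P :=
    hii.integral_fun_mul_eq_mul_integral h2.aestronglyMeasurable h4.aestronglyMeasurable
  have e3 : ∫ ω, (f ω).re * (g ω).im ∂P = (∫ ω, (f ω).re ∂P) * ∫ ω, (g ω).im ∂P :=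
    hri.integral_fun_mul_eq_mul_integral h1.aestronglyMeasurable h4.aestronglyMeasurable
  have e4 : ∫ ω, (f ω).im * (g ω).re ∂P = (∫ ω, (f ω).im ∂P) * ∫ ω, (g ω).re ∂P :=
    hir.integral_fun_mul_eq_mul_integral h2.aestronglyMeasurable h3.aestronglyMeasurable
  have i1 : Integrable (fun ω => (f ω).re * (g ω).re) P := hrr.integrable_mul h1 h3
  have i2 : Integrable (fun ω => (f ω).im * (g ω).im) P := hii.integrable_mul h2 h4
  have i3 : Integrable (fun ω => (f ω).re * (g ω).im) P := hri.integrable_mul h1 h4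
  have i4 : Integrable (fun ω => (f ω).im * (g ω).re) P := hir.integrable_mul h2 h3
  have hre : ∀ {h : Ω → ℂ}, Integrable h P → (∫ ω, h ω ∂P).re = ∫ ω, (h ω).re ∂P :=
    fun hh => (Complex.reCLM.integral_comp_comm hh).symm
  have him : ∀ {h : Ω → ℂ}, Integrable h P → (∫ ω, h ω ∂P).im = ∫ ω, (h ω).im ∂P :=
    fun hh => (Complex.imCLM.integral_comp_comm hh).symm
  apply Complex.ext
  · rw [hre hfg]
    simp only [Complex.mul_re]
    rw [integral_sub i1 i2, e1, e2, ← hre hf, ← hre hg, ← him hf, ← him hg]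
  · rw [him hfg]
    simp only [Complex.mul_im]
    rw [integral_add i3 i4, e3, e4, ← hre hf, ← hre hg, ← him hf, ← him hg]


-- product of independent bounded complex random variables
lemma iIndepFun_integral_prod_complex {ι : Type*} {f : ι → Ω → ℂ}
    (h : iIndepFun f P) (hm : ∀ i, Measurable (f i))
    (hb : ∀ i ω, ‖f i ω‖ ≤ 1) (s : Finset ι) :
    ∫ ω, ∏ i ∈ s, f i ω ∂P = ∏ i ∈ s, ∫ ω, f i ω ∂P := by
  classical
  induction s using Finset.induction with
  | empty => simp
  | @insert i s hi ih =>
    have hIF : IndepFun (fun ω => ∏ j ∈ s, f j ω) (f i) P := by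
      have h2 := h.indepFun_finsetProd_of_notMem hm hi
      have he : (∏ j ∈ s, f j) = fun ω => ∏ j ∈ s, f j ω := by
        ext ω; simp [Finset.prod_apply]
      rwa [he] at h2
    have hintprod : Integrable (fun ω => ∏ j ∈ s, f j ω) P := by
      refine (integrable_const (1:ℝ)).mono' ?_ (Eventually.of_forall fun ω => ?_)
      · exact (Finset.measurable_prod s (fun j _ => hm j)).aestronglyMeasurable
      · calc ‖∏ j ∈ s, f j ω‖ = ∏ j ∈ s, ‖f j ω‖ := norm_prod _ _
          _ ≤ ∏ j ∈ s, 1 := Finset.prod_le_prod (fun j _ => norm_nonneg _)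
              (fun j _ => hb j ω)
          _ = 1 := Finset.prod_const_one
    have hinti : Integrable (f i) P :=
      (integrable_const (1:ℝ)).mono' (hm i).aestronglyMeasurable
        (Eventually.of_forall fun ω => hb i ω)
    have hintmul : Integrable (fun ω => (∏ j ∈ s, f j ω) * f i ω) P := by
      refine (integrable_const (1:ℝ)).mono' ?_ (Eventually.of_forall fun ω => ?_)
      · exact ((Finset.measurable_prod s (fun j _ => hm j)).mul (hm i)).aestronglyMeasurable
      · rw [norm_mul]
        calc ‖∏ j ∈ s, f j ω‖ * ‖f i ω‖
            ≤ 1 * 1 := by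
              refine mul_le_mul ?_ (hb i ω) (norm_nonneg _) zero_le_one
              calc ‖∏ j ∈ s, f j ω‖ = ∏ j ∈ s, ‖f j ω‖ := norm_prod _ _
                _ ≤ ∏ j ∈ s, 1 := Finset.prod_le_prod (fun j _ => norm_nonneg _)
                    (fun j _ => hb j ω)
                _ = 1 := Finset.prod_const_one
          _ = 1 := one_mul 1
    simp only [Finset.prod_insert hi]
    have : ∫ ω, f i ω * ∏ j ∈ s, f j ω ∂P = ∫ ω, (∏ j ∈ s, f j ω) * f i ω ∂P := by
      simp_rw [mul_comm]
    rw [this, hIF.integral_mul_complex hintprod hinti hintmul, ih, mul_comm]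

lemma norm_exp_I_mul_real (r : ℝ) : ‖Complex.exp (Complex.I * (r : ℂ))‖ = 1 := by
  rw [Complex.norm_exp]
  simp [Complex.mul_re]

lemma rePsi_nonpos {n : ℕ} {X : ℝ → Ω → (Fin n → ℝ)} {Ψ : (Fin n → ℝ) → ℂ}
    (hΨ : IsCharExponent P X Ψ) (θ : Fin n → ℝ) : (Ψ θ).re ≤ 0 := by
  have h := hΨ 1 zero_le_one θ
  have hnorm : ‖∫ ω, Complex.exp (Complex.I * ((∑ j, θ j * X 1 ω j : ℝ) : ℂ)) ∂P‖ ≤ 1 := by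
    calc ‖∫ ω, Complex.exp (Complex.I * ((∑ j, θ j * X 1 ω j : ℝ) : ℂ)) ∂P‖
        ≤ 1 * (P univ).toReal := norm_integral_le_of_norm_le_const
          (Eventually.of_forall fun ω => le_of_eq (norm_exp_I_mul_real _))
      _ = 1 := by simp
  rw [h] at hnorm
  rw [Complex.norm_exp] at hnorm
  have : ((1 : ℝ) : ℂ) * Ψ θ = Ψ θ := by norm_num
  rw [this] at hnorm
  exact Real.exp_le_one_iff.mp hnorm

variable {n : ℕ} (Ψ : (Fin (n+1) → ℝ) → ℂ) (θ : Fin (n+1) → ℝ)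

lemma ordExp_eq_intervalIntegral (s : Fin (n+1) → ℝ) (hs : ∀ j, 0 ≤ s j)
    (σ : Equiv.Perm (Fin (n+1))) (hσ : Monotone (s ∘ σ)) :
    ordExp σ s Ψ θ
      = ∫ u in (0:ℝ)..(s (σ (Fin.last n))), Ψ ({j | u < s j}.indicator θ) := by
  set f : ℝ → ℂ := fun u => Ψ ({j | u < s j}.indicator θ) with hf
  set a : ℕ → ℝ := fun i => if i = 0 then 0 else s (σ ⟨min (i-1) n, by omega⟩) with ha
  have haS : ∀ k : Fin (n+1), a ((k : ℕ) + 1) = s (σ k) := by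
    intro k
    simp only [ha, Nat.add_sub_cancel, if_neg (Nat.succ_ne_zero _)]
    exact congrArg (fun x : Fin (n+1) => s (σ x))
      (Fin.ext (by simpa using Nat.min_eq_left (Nat.lt_succ_iff.mp k.isLt)))
  have hprev : ∀ k : Fin (n+1), (hk : (k : ℕ) ≠ 0) →
      a (k : ℕ) = s (σ ⟨(k : ℕ) - 1, by have := k.isLt; omega⟩) := by
    intro k hk
    simp only [ha, if_neg hk]
    exact congrArg (fun x : Fin (n+1) => s (σ x))
      (Fin.ext (by simpa using Nat.min_eq_left (by have := k.isLt; omega)))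
  have hle : ∀ k : Fin (n+1), a (k : ℕ) ≤ a ((k : ℕ) + 1) := by
    intro k
    rw [haS]
    by_cases hk : (k : ℕ) = 0
    · simp only [ha, hk, if_pos rfl]; exact hs _
    · rw [hprev k hk]
      exact hσ (Fin.le_def.mpr (Nat.sub_le _ _))
  -- the constant value of f on each open interval
  have hsetEq : ∀ k : Fin (n+1), ∀ u ∈ Ioo (a (k : ℕ)) (a ((k : ℕ) + 1)),
      {j | u < s j} = {j | ∃ m : Fin (n+1), k ≤ m ∧ σ m = j} := by
    intro k u hu
    ext j
    simp only [mem_setOf_eq]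
    constructor
    · intro hj
      refine ⟨σ.symm j, ?_, σ.apply_symm_apply j⟩
      by_contra hlt
      push_neg at hlt
      have hv := Fin.lt_def.mp hlt
      have hk0 : (k : ℕ) ≠ 0 := by omega
      have h1 : s (σ (σ.symm j)) ≤ a (k : ℕ) := by
        rw [hprev k hk0]
        exact hσ (Fin.le_def.mpr (show ((σ.symm j : Fin (n+1)) : ℕ) ≤ (k : ℕ) - 1 by omega))
      rw [σ.apply_symm_apply] at h1
      exact absurd hj (not_lt.2 (h1.trans hu.1.le))
    · rintro ⟨m, hkm, rfl⟩
      have : s (σ k) ≤ s (σ m) := hσ hkm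
      calc u < a ((k : ℕ) + 1) := hu.2
        _ = s (σ k) := haS k
        _ ≤ s (σ m) := this
  have hconst : ∀ k : Fin (n+1), EqOn f
      (fun _ => Ψ ({j | ∃ m : Fin (n+1), k ≤ m ∧ σ m = j}.indicator θ))
      (Ioo (a (k : ℕ)) (a ((k : ℕ) + 1))) := by
    intro k u hu
    simp only [hf]
    rw [hsetEq k u hu]
  have hterm : ∀ k : Fin (n+1),
      (((s (σ k) : ℝ) : ℂ) -
        if hk : (k : ℕ) = 0 then 0
        else ((s (σ ⟨(k : ℕ) - 1, by have := k.isLt; omega⟩) : ℝ) : ℂ)) *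
      Ψ ({j | ∃ m : Fin (n+1), k ≤ m ∧ σ m = j}.indicator θ)
      = ∫ u in (a (k : ℕ))..(a ((k : ℕ) + 1)), f u := by
    intro k
    rw [intervalIntegral.integral_of_le (hle k), MeasureTheory.integral_Ioc_eq_integral_Ioo,
      setIntegral_congr_fun measurableSet_Ioo (hconst k), setIntegral_const, measureReal_def, Real.volume_Ioo,
      ENNReal.toReal_ofReal (sub_nonneg.2 (hle k))]
    rw [Complex.real_smul]
    congr 1
    by_cases hk : (k : ℕ) = 0
    · rw [dif_pos hk]
      have h0 : a (k : ℕ) = 0 := by simp [ha, hk]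
      rw [haS, h0]
      push_cast
      ring
    · rw [dif_neg hk, haS, hprev k hk]
      push_cast
      ring
  have hint : ∀ i, i < n + 1 → IntervalIntegrable f volume (a i) (a (i + 1)) := by
    intro i hi
    have hki : ((⟨i, hi⟩ : Fin (n+1)) : ℕ) = i := rfl
    rw [intervalIntegrable_iff_integrableOn_Ioc_of_le (by simpa [hki] using hle ⟨i, hi⟩)]
    rw [integrableOn_Ioc_iff_integrableOn_Ioo]
    exact (integrableOn_const measure_Ioo_lt_top.ne).congr_fun
      (fun u hu => ((hconst ⟨i, hi⟩) hu).symm) measurableSet_Ioo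
  calc ordExp σ s Ψ θ
      = ∑ k : Fin (n+1), ∫ u in (a (k : ℕ))..(a ((k : ℕ) + 1)), f u :=
        Finset.sum_congr rfl (fun k _ => hterm k)
    _ = ∑ i ∈ Finset.range (n+1), ∫ u in (a i)..(a (i + 1)), f u :=
        Fin.sum_univ_eq_sum_range (fun i => ∫ u in (a i)..(a (i + 1)), f u) (n+1)
    _ = ∫ u in (a 0)..(a (n+1)), f u :=
        intervalIntegral.sum_integral_adjacent_intervals hint
    _ = ∫ u in (0:ℝ)..(s (σ (Fin.last n))), f u := by
        have h0 : a 0 = 0 := by simp [ha]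
        have hl : a (n+1) = s (σ (Fin.last n)) := by
          simp only [ha, if_neg (Nat.succ_ne_zero n), Nat.add_sub_cancel, min_self]
          rfl
        rw [h0, hl]

lemma ordExp_perm_congr {n : ℕ} (Ψ : (Fin n → ℝ) → ℂ) (θ : Fin n → ℝ)
    (s : Fin n → ℝ) (hs : ∀ j, 0 ≤ s j)
    (σ τ : Equiv.Perm (Fin n)) (hσ : Monotone (s ∘ σ)) (hτ : Monotone (s ∘ τ)) :
    ordExp σ s Ψ θ = ordExp τ s Ψ θ := by
  cases n with
  | zero => simp [ordExp]
  | succ n =>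
    rw [ordExp_eq_intervalIntegral Ψ θ s hs σ hσ, ordExp_eq_intervalIntegral Ψ θ s hs τ hτ]
    have hmax : s (σ (Fin.last n)) = s (τ (Fin.last n)) := by
      apply le_antisymm
      · have := hτ (Fin.le_last (τ.symm (σ (Fin.last n))))
        simpa using this
      · have := hσ (Fin.le_last (σ.symm (τ (Fin.last n))))
        simpa using this
    rw [hmax]

lemma ordExpSorted_eq_ordExp {n : ℕ} (Ψ : (Fin n → ℝ) → ℂ) (θ : Fin n → ℝ)
    (s : Fin n → ℝ) (hs : ∀ j, 0 ≤ s j)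
    (σ : Equiv.Perm (Fin n)) (hσ : Monotone (s ∘ σ)) :
    ordExpSorted s Ψ θ = ordExp σ s Ψ θ :=
  ordExp_perm_congr Ψ θ s hs _ σ (Tuple.monotone_sort s) hσ


lemma re_ordExp_nonpos {n : ℕ} {Ψ : (Fin n → ℝ) → ℂ} (θ : Fin n → ℝ)
    (hRe : ∀ θ', (Ψ θ').re ≤ 0) (s : Fin n → ℝ) (hs : ∀ j, 0 ≤ s j)
    (σ : Equiv.Perm (Fin n)) (hσ : Monotone (s ∘ σ)) :
    (ordExp σ s Ψ θ).re ≤ 0 := by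
  rw [ordExp, Complex.re_sum]
  apply Finset.sum_nonpos
  intro k _
  by_cases hk : (k : ℕ) = 0
  · rw [dif_pos hk]
    have : (((s (σ k) : ℝ) : ℂ) - 0) = ((s (σ k) : ℝ) : ℂ) := by ring
    rw [this]
    simp only [Complex.mul_re, Complex.ofReal_re, Complex.ofReal_im, zero_mul, sub_zero]
    exact mul_nonpos_of_nonneg_of_nonpos (hs _) (hRe _)
  · rw [dif_neg hk]
    rw [← Complex.ofReal_sub]
    simp only [Complex.mul_re, Complex.ofReal_re, Complex.ofReal_im, zero_mul, sub_zero]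
    refine mul_nonpos_of_nonneg_of_nonpos (sub_nonneg.2 (hσ ?_)) (hRe _)
    exact Fin.le_def.mpr (Nat.sub_le _ _)

lemma re_ordExpSorted_nonpos {n : ℕ} {Ψ : (Fin n → ℝ) → ℂ} (θ : Fin n → ℝ)
    (hRe : ∀ θ', (Ψ θ').re ≤ 0) (s : Fin n → ℝ) (hs : ∀ j, 0 ≤ s j) :
    (ordExpSorted s Ψ θ).re ≤ 0 :=
  re_ordExp_nonpos θ hRe s hs _ (Tuple.monotone_sort s)

lemma charFun_multiTime {n : ℕ} {X : ℝ → Ω → (Fin n → ℝ)} {Ψ : (Fin n → ℝ) → ℂ}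
    (hX : IsLevyProcess P X) (hΨ : IsCharExponent P X Ψ)
    (s : Fin n → ℝ) (hs : ∀ j, 0 ≤ s j)
    (σ : Equiv.Perm (Fin n)) (hσ : Monotone (s ∘ σ)) (θ : Fin n → ℝ) :
    ∫ ω, Complex.exp (Complex.I * ((∑ j, θ j * X (s j) ω j : ℝ) : ℂ)) ∂P
      = Complex.exp (ordExp σ s Ψ θ) := by
  obtain ⟨hXm, hX0, hXind, hXstat, -⟩ := hX
  -- the time grid
  set τ : Fin (n+1) → ℝ := fun i =>
    if h : (i : ℕ) = 0 then 0 else s (σ ⟨(i : ℕ) - 1, by have := i.isLt; omega⟩) with hτ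
  have hτ0 : τ 0 = 0 := by simp [hτ]
  have hτsucc : ∀ k : Fin n, τ k.succ = s (σ k) := by
    intro k
    have hv : ((k.succ : Fin (n+1)) : ℕ) = (k : ℕ) + 1 := Fin.val_succ k
    simp only [hτ, hv]
    rw [dif_neg (by omega)]
    exact congrArg (fun x : Fin n => s (σ x)) (Fin.ext (by simp))
  have hτcast : ∀ k : Fin n, τ k.castSucc
      = if _ : (k : ℕ) = 0 then 0
        else s (σ ⟨(k : ℕ) - 1, by have := k.isLt; omega⟩) := by
    intro k
    simp only [hτ, Fin.coe_castSucc]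
  have hτmono : Monotone τ := by
    intro i i' hii'
    have hvle : (i : ℕ) ≤ (i' : ℕ) := Fin.le_def.mp hii'
    by_cases h0 : (i : ℕ) = 0
    · simp only [hτ, dif_pos h0]
      by_cases h0' : (i' : ℕ) = 0
      · simp only [dif_pos h0', le_refl]
      · simp only [dif_neg h0']
        exact hs _
    · have h0' : (i' : ℕ) ≠ 0 := by omega
      simp only [hτ, dif_neg h0, dif_neg h0']
      exact hσ (Fin.le_def.mpr (by simp; omega))
  have hτnonneg : ∀ i, 0 ≤ τ i := by
    intro i
    by_cases h0 : (i : ℕ) = 0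
    · simp only [hτ, dif_pos h0, le_refl]
    · simp only [hτ, dif_neg h0]; exact hs _
  -- increments
  have hΔm : ∀ k : Fin n, Measurable
      (fun ω => X (τ k.succ) ω - X (τ k.castSucc) ω) := fun k => (hXm _).sub (hXm _)
  have hii : iIndepFun
      (fun k : Fin n => fun ω => X (τ k.succ) ω - X (τ k.castSucc) ω) P :=
    hXind n τ hτ0 hτmono
  -- coefficient vectors
  set c : Fin n → (Fin n → ℝ) :=
    fun k => {j | ∃ m : Fin n, k ≤ m ∧ σ m = j}.indicator θ with hc
  -- the complex factors
  set g : Fin n → Ω → ℂ := fun k ω =>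
    Complex.exp (Complex.I *
      ((∑ j, c k j * (X (τ k.succ) ω j - X (τ k.castSucc) ω j) : ℝ) : ℂ)) with hg
  have hgm : ∀ k, Measurable (g k) := by
    intro k
    apply Complex.measurable_exp.comp
    apply measurable_const.mul
    apply Complex.measurable_ofReal.comp
    exact Finset.measurable_sum _ (fun j _ => measurable_const.mul
      (((measurable_pi_apply j).comp (hXm (τ k.succ))).sub
        ((measurable_pi_apply j).comp (hXm (τ k.castSucc)))))
  have hgb : ∀ k ω, ‖g k ω‖ = 1 := fun k ω => norm_exp_I_mul_real _
  -- pointwise identity a.e.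
  have hae : ∀ᵐ ω ∂P, Complex.exp (Complex.I * ((∑ j, θ j * X (s j) ω j : ℝ) : ℂ))
      = ∏ k, g k ω := by
    filter_upwards [hX0] with ω h0
    rw [hg]
    simp only
    rw [← Complex.exp_sum]
    congr 1
    rw [← Finset.mul_sum, ← Complex.ofReal_sum]
    congr 2
    rw [Finset.sum_comm]
    apply Finset.sum_congr rfl
    intro j _
    have hcj : ∀ k : Fin n, c k j = if (k : ℕ) ≤ ((σ.symm j : Fin n) : ℕ) then θ j else 0 := by
      intro k
      rw [hc]
      simp only [Set.indicator_apply, Set.mem_setOf_eq]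
      refine if_congr ?_ rfl rfl
      constructor
      · rintro ⟨m, hm, rfl⟩
        simpa using Fin.le_def.mp hm
      · intro h
        exact ⟨σ.symm j, Fin.le_def.mpr h, σ.apply_symm_apply j⟩
    set K : ℕ := ((σ.symm j : Fin n) : ℕ) with hK
    have hKlt : K < n := (σ.symm j).isLt
    set G : ℕ → ℝ := fun i => X (τ ⟨min i n, by omega⟩) ω j with hG
    have hGsucc : ∀ k : Fin n,
        X (τ k.succ) ω j - X (τ k.castSucc) ω j = G ((k : ℕ) + 1) - G (k : ℕ) := by
      intro k
      have h1 : (⟨min ((k : ℕ) + 1) n, by omega⟩ : Fin (n+1)) = k.succ :=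
        Fin.ext (by simpa using Nat.min_eq_left (Nat.succ_le_of_lt k.isLt))
      have h2 : (⟨min (k : ℕ) n, by omega⟩ : Fin (n+1)) = k.castSucc :=
        Fin.ext (by simpa using Nat.min_eq_left (le_of_lt k.isLt))
      rw [hG]
      simp only
      rw [h1, h2]
    symm
    calc ∑ k : Fin n, c k j * (X (τ k.succ) ω j - X (τ k.castSucc) ω j)
        = ∑ k : Fin n, (if (k : ℕ) ≤ K then θ j * (G ((k : ℕ) + 1) - G (k : ℕ)) else 0) := by
          apply Finset.sum_congr rfl
          intro k _
          rw [hcj k, hGsucc k, ite_mul, zero_mul]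
      _ = ∑ i ∈ Finset.range n, (if i ≤ K then θ j * (G (i + 1) - G i) else 0) :=
          Fin.sum_univ_eq_sum_range (fun i => if i ≤ K then θ j * (G (i + 1) - G i) else 0) n
      _ = ∑ i ∈ Finset.range (K + 1), θ j * (G (i + 1) - G i) := by
          rw [← Finset.sum_filter]
          apply Finset.sum_congr _ (fun _ _ => rfl)
          ext i
          simp only [Finset.mem_filter, Finset.mem_range, Nat.lt_succ_iff]
          omega
      _ = θ j * (G (K + 1) - G 0) := by rw [← Finset.mul_sum, Finset.sum_range_sub]
      _ = θ j * X (s j) ω j := by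
          have e1 : G (K + 1) = X (s j) ω j := by
            rw [hG]
            simp only
            have h1 : (⟨min (K + 1) n, by omega⟩ : Fin (n+1)) = (σ.symm j).succ :=
              Fin.ext (by show min (K + 1) n = K + 1; exact Nat.min_eq_left hKlt)
            rw [h1, hτsucc, σ.apply_symm_apply]
          have e2 : G 0 = 0 := by
            rw [hG]
            simp only
            have h1 : (⟨min 0 n, by omega⟩ : Fin (n+1)) = 0 := Fin.ext (by simp)
            rw [h1, hτ0, h0]
            simp
          rw [e1, e2, sub_zero]
  rw [integral_congr_ae hae]
  -- independence of the factors
  have hgi : iIndepFun g P := by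
    have hφm : ∀ k : Fin n, Measurable (fun x : Fin n → ℝ =>
        Complex.exp (Complex.I * ((∑ j, c k j * x j : ℝ) : ℂ))) := by
      intro k
      apply Complex.measurable_exp.comp
      apply measurable_const.mul
      apply Complex.measurable_ofReal.comp
      exact Finset.measurable_sum _ (fun j _ => measurable_const.mul (measurable_pi_apply j))
    exact hii.comp (fun k (x : Fin n → ℝ) =>
      Complex.exp (Complex.I * ((∑ j, c k j * x j : ℝ) : ℂ))) hφm
  rw [iIndepFun_integral_prod_complex hgi hgm (fun k ω => le_of_eq (hgb k ω)) Finset.univ]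
  -- each factor
  have hfac : ∀ k : Fin n, ∫ ω, g k ω ∂P
      = Complex.exp (((τ k.succ - τ k.castSucc : ℝ) : ℂ) * Ψ (c k)) := by
    intro k
    have hcs : k.castSucc ≤ k.succ := Fin.castSucc_le_succ k
    have hδ : 0 ≤ τ k.succ - τ k.castSucc := sub_nonneg.2 (hτmono hcs)
    have hstat := hXstat (τ k.castSucc) (τ k.succ - τ k.castSucc) (hτnonneg _) hδ
    have hadd : τ k.castSucc + (τ k.succ - τ k.castSucc) = τ k.succ := by ring
    rw [hadd] at hstat
    have hφc : Continuous (fun x : Fin n → ℝ =>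
        Complex.exp (Complex.I * ((∑ j, c k j * x j : ℝ) : ℂ))) := by
      apply Complex.continuous_exp.comp
      apply continuous_const.mul
      apply Complex.continuous_ofReal.comp
      exact continuous_finset_sum _ (fun j _ => continuous_const.mul (continuous_apply j))
    have h1 : ∫ ω, g k ω ∂P = ∫ x, Complex.exp (Complex.I * ((∑ j, c k j * x j : ℝ) : ℂ))
        ∂(P.map (fun ω => X (τ k.succ) ω - X (τ k.castSucc) ω)) := by
      rw [integral_map (hΔm k).aemeasurable hφc.aestronglyMeasurable]
      rw [hg]
      simp only [Pi.sub_apply]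
    rw [h1, hstat, integral_map (hXm _).aemeasurable hφc.aestronglyMeasurable]
    exact hΨ _ hδ (c k)
  calc ∏ k : Fin n, ∫ ω, g k ω ∂P
      = ∏ k : Fin n, Complex.exp (((τ k.succ - τ k.castSucc : ℝ) : ℂ) * Ψ (c k)) :=
        Finset.prod_congr rfl (fun k _ => hfac k)
    _ = Complex.exp (∑ k : Fin n, ((τ k.succ - τ k.castSucc : ℝ) : ℂ) * Ψ (c k)) :=
        (Complex.exp_sum _ _).symm
    _ = Complex.exp (ordExp σ s Ψ θ) := by
        congr 1
        rw [ordExp]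
        apply Finset.sum_congr rfl
        intro k _
        congr 1
        rw [Complex.ofReal_sub, hτsucc, hτcast]
        by_cases hk : (k : ℕ) = 0
        · rw [dif_pos hk, dif_pos hk]
          norm_num
        · rw [dif_neg hk, dif_neg hk]

lemma indepFun_of_indep {m₁ m₂ : MeasurableSpace Ω} {β γ : Type*}
    [MeasurableSpace β] [MeasurableSpace γ]
    (h : Indep m₁ m₂ P) {f : Ω → β} {g : Ω → γ}
    (hf : Measurable[m₁] f) (hg : Measurable[m₂] g) :
    IndepFun f g P := by
  rw [IndepFun_iff]
  rw [Indep_iff] at h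
  intro t1 t2 ht1 ht2
  obtain ⟨s1, hs1, rfl⟩ := ht1
  obtain ⟨s2, hs2, rfl⟩ := ht2
  exact h _ _ (hf hs1) (hg hs2)

lemma measurable_comp_countable_range {β γ : Type*} [MeasurableSpace β]
    [MeasurableSingletonClass β] [MeasurableSpace γ] {m : MeasurableSpace Ω} {q : Ω → β}
    (hq : Measurable[m] q) (hc : (Set.range q).Countable) (G : β → γ) :
    Measurable[m] fun ω => G (q ω) := by
  intro A _
  have hrw : (fun ω => G (q ω)) ⁻¹' A = ⋃ v ∈ {v | v ∈ Set.range q ∧ G v ∈ A}, q ⁻¹' {v} := by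
    ext ω
    simp only [Set.mem_preimage, Set.mem_iUnion, Set.mem_setOf_eq, Set.mem_singleton_iff]
    constructor
    · intro h
      exact ⟨q ω, ⟨⟨ω, rfl⟩, h⟩, rfl⟩
    · rintro ⟨v, ⟨-, hv⟩, rfl⟩
      exact hv
  rw [hrw]
  exact MeasurableSet.biUnion (hc.mono (fun v hv => hv.1))
    (fun v _ => hq (measurableSet_singleton v))

lemma measurable_eval_countable {Y : ℝ → Ω → ℝ} (hY : ∀ u, Measurable (Y u))
    {q : Ω → ℝ} (hq : Measurable q) (hc : (Set.range q).Countable) :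
    Measurable fun ω => Y (q ω) ω := by
  intro A hA
  have hrw : (fun ω => Y (q ω) ω) ⁻¹' A = ⋃ v ∈ Set.range q, (q ⁻¹' {v} ∩ Y v ⁻¹' A) := by
    ext ω
    simp only [Set.mem_preimage, Set.mem_iUnion, Set.mem_inter_iff, Set.mem_singleton_iff]
    constructor
    · intro h
      exact ⟨q ω, ⟨ω, rfl⟩, rfl, h⟩
    · rintro ⟨v, -, rfl, hv⟩
      exact hv
  rw [hrw]
  exact MeasurableSet.biUnion hc
    (fun v _ => (hq (measurableSet_singleton v)).inter (hY v hA))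

lemma discrete_identity {n : ℕ} (X T : ℝ → Ω → (Fin n → ℝ)) (Ψ : (Fin n → ℝ) → ℂ)
    (hX : IsLevyProcess P X) (hΨ : IsCharExponent P X Ψ)
    (hindep : Indep (processSigma X) (processSigma T) P)
    (hTm : ∀ u : ℝ, Measurable (T u))
    (F : Ω → ℂ) (hFσ : Measurable[processSigma T] F) (hFb : ∀ ω, ‖F ω‖ ≤ 1)
    (d : Ω → (Fin n → ℤ)) (hdσ : Measurable[processSigma T] d)
    (v : (Fin n → ℤ) → (Fin n → ℝ))
    (hv : ∀ z : Fin n → ℤ, (∃ ω, d ω = z) → ∀ j, 0 ≤ v z j)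
    (θ₂ : Fin n → ℝ) :
    ∫ ω, F ω * Complex.exp (Complex.I * ((∑ j, θ₂ j * X (v (d ω) j) ω j : ℝ) : ℂ)) ∂P
      = ∫ ω, F ω * Complex.exp (ordExpSorted (v (d ω)) Ψ θ₂) ∂P := by
  have hσT_le : processSigma T ≤ ‹MeasurableSpace Ω› :=
    iSup_le fun u => (hTm u).comap_le
  have hσX_le : processSigma X ≤ ‹MeasurableSpace Ω› :=
    iSup_le fun u => (hX.1 u).comap_le
  have hd : Measurable d := hdσ.mono hσT_le le_rfl
  have hF : Measurable F := hFσ.mono hσT_le le_rfl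
  have hcd : (Set.range d).Countable := Set.to_countable _
  have hXq : ∀ j : Fin n, Measurable fun ω => X (v (d ω) j) ω j := by
    intro j
    have hqj : Measurable fun ω => v (d ω) j :=
      measurable_comp_countable_range hd hcd (fun z => v z j)
    have hqrange : (Set.range fun ω => v (d ω) j).Countable := by
      refine (hcd.image (fun z => v z j)).mono ?_
      rintro x ⟨ω, rfl⟩
      exact ⟨d ω, ⟨ω, rfl⟩, rfl⟩
    exact measurable_eval_countable
      (fun u => (measurable_pi_apply j).comp (hX.1 u)) hqj hqrange
  have hRe : ∀ θ', (Ψ θ').re ≤ 0 := rePsi_nonpos hΨ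
  -- the two integrands
  set f₁ : Ω → ℂ := fun ω =>
    F ω * Complex.exp (Complex.I * ((∑ j, θ₂ j * X (v (d ω) j) ω j : ℝ) : ℂ)) with hf₁
  set f₂ : Ω → ℂ := fun ω => F ω * Complex.exp (ordExpSorted (v (d ω)) Ψ θ₂) with hf₂
  have hf₁m : Measurable f₁ := by
    apply hF.mul
    apply Complex.measurable_exp.comp
    apply measurable_const.mul
    apply Complex.measurable_ofReal.comp
    exact Finset.measurable_sum _ (fun j _ => measurable_const.mul (hXq j))
  have hf₂m : Measurable f₂ := by
    apply hF.mul
    exact measurable_comp_countable_range (m := ‹MeasurableSpace Ω›) hd hcd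
      (fun z => Complex.exp (ordExpSorted (v z) Ψ θ₂))
  have hf₁b : ∀ ω, ‖f₁ ω‖ ≤ 1 := by
    intro ω
    rw [hf₁]
    simp only [norm_mul]
    calc ‖F ω‖ * ‖Complex.exp (Complex.I * ((∑ j, θ₂ j * X (v (d ω) j) ω j : ℝ) : ℂ))‖
        = ‖F ω‖ * 1 := by rw [norm_exp_I_mul_real]
      _ ≤ 1 := by rw [mul_one]; exact hFb ω
  have hf₂b : ∀ ω, ‖f₂ ω‖ ≤ 1 := by
    intro ω
    rw [hf₂]
    simp only [norm_mul]
    have h2 : ‖Complex.exp (ordExpSorted (v (d ω)) Ψ θ₂)‖ ≤ 1 := by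
      rw [Complex.norm_exp]
      rw [Real.exp_le_one_iff]
      exact re_ordExpSorted_nonpos θ₂ hRe _ (hv (d ω) ⟨ω, rfl⟩)
    calc ‖F ω‖ * ‖Complex.exp (ordExpSorted (v (d ω)) Ψ θ₂)‖
        ≤ 1 * 1 := mul_le_mul (hFb ω) h2 (norm_nonneg _) zero_le_one
      _ = 1 := one_mul 1
  have hf₁i : Integrable f₁ P :=
    (integrable_const (1:ℝ)).mono' hf₁m.aestronglyMeasurable (Eventually.of_forall hf₁b)
  have hf₂i : Integrable f₂ P :=
    (integrable_const (1:ℝ)).mono' hf₂m.aestronglyMeasurable (Eventually.of_forall hf₂b)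
  -- partition of Ω by the value of d
  set A : (Fin n → ℤ) → Set Ω := fun z => d ⁻¹' {z} with hA
  have hAm : ∀ z, MeasurableSet (A z) := fun z => hd (measurableSet_singleton z)
  have hAσ : ∀ z, MeasurableSet[processSigma T] (A z) :=
    fun z => hdσ (measurableSet_singleton z)
  have hAdisj : Pairwise (Function.onFun Disjoint A) := by
    intro z z' hzz'
    refine Set.disjoint_left.mpr ?_
    intro ω h1 h2
    exact hzz' (by rw [← h1, ← h2])
  have hAuniv : ⋃ z, A z = univ := by
    ext ω
    simp [hA]
  have h₁ := hasSum_integral_iUnion hAm hAdisj (hf₁i.integrableOn (s := ⋃ z, A z))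
  have h₂ := hasSum_integral_iUnion hAm hAdisj (hf₂i.integrableOn (s := ⋃ z, A z))
  rw [hAuniv, setIntegral_univ] at h₁ h₂
  -- per-piece identity
  have hpiece : ∀ z, ∫ ω in A z, f₁ ω ∂P = ∫ ω in A z, f₂ ω ∂P := by
    intro z
    rcases Set.eq_empty_or_nonempty (A z) with hAe | ⟨ω₀, hω₀⟩
    · rw [hAe]
      simp
    · have hdω₀ : d ω₀ = z := hω₀
      have hvz : ∀ j, 0 ≤ v z j := hv z ⟨ω₀, hdω₀⟩
      -- the σ(X)-measurable factor at fixed times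
      set G : Ω → ℂ := fun ω =>
        Complex.exp (Complex.I * ((∑ j, θ₂ j * X (v z j) ω j : ℝ) : ℂ)) with hG
      have hGσX : Measurable[processSigma X] G := by
        apply (Complex.measurable_exp.comp ?_)
        apply Measurable.const_mul
        apply Complex.measurable_ofReal.comp
        refine Finset.measurable_sum _ (fun j _ => Measurable.const_mul ?_ (θ₂ j))
        exact (measurable_pi_apply j).comp
          (Measurable.of_comap_le (le_iSup (fun u => MeasurableSpace.comap (X u) inferInstance)
            (v z j)))
      have hGm : Measurable G := hGσX.mono hσX_le le_rfl
      have hGb : ∀ ω, ‖G ω‖ = 1 := fun ω => norm_exp_I_mul_real _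
      -- independence
      have hIndAF : Measurable[processSigma T] fun ω => (A z).indicator F ω := by
        have := hFσ.indicator (hAσ z)
        exact this
      have hInd : IndepFun (fun ω => (A z).indicator F ω) G P :=
        indepFun_of_indep hindep.symm hIndAF hGσX
      have hiAF : Measurable fun ω => (A z).indicator F ω :=
        (hFσ.indicator (hAσ z)).mono hσT_le le_rfl
      have hiAFb : ∀ ω, ‖(A z).indicator F ω‖ ≤ 1 := by
        intro ω
        by_cases hω : ω ∈ A z
        · rw [Set.indicator_of_mem hω]; exact hFb ω
        · rw [Set.indicator_of_notMem hω]; simp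
      have hintAF : Integrable (fun ω => (A z).indicator F ω) P :=
        (integrable_const (1:ℝ)).mono' hiAF.aestronglyMeasurable (Eventually.of_forall hiAFb)
      have hintG : Integrable G P :=
        (integrable_const (1:ℝ)).mono' hGm.aestronglyMeasurable
          (Eventually.of_forall fun ω => le_of_eq (hGb ω))
      have hintAFG : Integrable (fun ω => (A z).indicator F ω * G ω) P := by
        refine (integrable_const (1:ℝ)).mono' (hiAF.mul hGm).aestronglyMeasurable
          (Eventually.of_forall fun ω => ?_)
        rw [norm_mul, hGb, mul_one]
        exact hiAFb ω
      -- the multi-time characteristic function at the fixed vector of times v z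
      have hchar : ∫ ω, G ω ∂P = Complex.exp (ordExpSorted (v z) Ψ θ₂) :=
        charFun_multiTime hX hΨ (v z) hvz (Tuple.sort (v z)) (Tuple.monotone_sort (v z)) θ₂
      calc ∫ ω in A z, f₁ ω ∂P
          = ∫ ω in A z, F ω * G ω ∂P := by
            refine setIntegral_congr_fun (hAm z) (fun ω hω => ?_)
            have : d ω = z := hω
            rw [hf₁, hG]
            simp only
            rw [this]
        _ = ∫ ω, (A z).indicator F ω * G ω ∂P := by
            rw [← integral_indicator (hAm z)]
            congr 1
            ext ω
            exact Set.indicator_mul_left (A z) F G (i := ω)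
        _ = (∫ ω, (A z).indicator F ω ∂P) * ∫ ω, G ω ∂P :=
            hInd.integral_mul_complex hintAF hintG hintAFG
        _ = (∫ ω, (A z).indicator F ω ∂P) * Complex.exp (ordExpSorted (v z) Ψ θ₂) := by
            rw [hchar]
        _ = ∫ ω, (A z).indicator F ω * Complex.exp (ordExpSorted (v z) Ψ θ₂) ∂P := by
            rw [integral_mul_const]
        _ = ∫ ω in A z, F ω * Complex.exp (ordExpSorted (v z) Ψ θ₂) ∂P := by
            rw [← integral_indicator (hAm z)]
            congr 1
            ext ω
            exact (Set.indicator_mul_left (A z) F (fun _ => Complex.exp (ordExpSorted (v z) Ψ θ₂)) (i := ω)).symm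
        _ = ∫ ω in A z, f₂ ω ∂P := by
            refine setIntegral_congr_fun (hAm z) (fun ω hω => ?_)
            have : d ω = z := hω
            rw [hf₂]
            simp only
            rw [this]
  simp only [hpiece] at h₁
  exact h₁.unique h₂

end Aux

/-- for a Lévy process `X` with characteristic exponent `Ψ` and an independent
subordinator `T`, the joint characteristic function of `(T(t), (X∘T)(t))` satisfies
`E[exp(i⟨θ₁,T(t)⟩ + i⟨θ₂,(X∘T)(t)⟩)] = E[exp(i⟨θ₁,T(t)⟩ + (T(t) ▸ Ψ)(θ₂))]`. -/
theorem charFun_strong_subordination {Ω : Type*} [MeasurableSpace Ω]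
    (P : Measure Ω) [IsProbabilityMeasure P] {n : ℕ}
    (X T : ℝ → Ω → (Fin n → ℝ)) (Ψ : (Fin n → ℝ) → ℂ)
    (hX : IsLevyProcess P X) (hΨ : IsCharExponent P X Ψ)
    (hT : IsSubordinator P T)
    (hindep : Indep (processSigma X) (processSigma T) P) :
    ∀ t : ℝ, 0 ≤ t → ∀ θ₁ θ₂ : Fin n → ℝ,
      ∫ ω, Complex.exp (Complex.I * ((∑ j, θ₁ j * T t ω j : ℝ) : ℂ)
            + Complex.I * ((∑ j, θ₂ j * X (T t ω j) ω j : ℝ) : ℂ)) ∂P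
        = ∫ ω, Complex.exp (Complex.I * ((∑ j, θ₁ j * T t ω j : ℝ) : ℂ)
            + ordExpSorted (T t ω) Ψ θ₂) ∂P := by
  intro t ht θ₁ θ₂
  obtain ⟨hTlevy, hTprop⟩ := hT
  have hTm : ∀ u : ℝ, Measurable (T u) := hTlevy.1
  have hσT_le : processSigma T ≤ ‹MeasurableSpace Ω› :=
    iSup_le fun u => (hTm u).comap_le
  have hTtσ : Measurable[processSigma T] (T t) :=
    Measurable.of_comap_le (le_iSup (fun u => MeasurableSpace.comap (T u) inferInstance) t)
  simp only [Complex.exp_add]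
  set F : Ω → ℂ := fun ω => Complex.exp (Complex.I * ((∑ j, θ₁ j * T t ω j : ℝ) : ℂ)) with hF
  have hFσ : Measurable[processSigma T] F := by
    apply Complex.measurable_exp.comp
    apply Measurable.const_mul
    apply Complex.measurable_ofReal.comp
    exact Finset.measurable_sum _
      (fun j _ => Measurable.const_mul ((measurable_pi_apply j).comp hTtσ) (θ₁ j))
  have hFb : ∀ ω, ‖F ω‖ ≤ 1 := fun ω => le_of_eq (norm_exp_I_mul_real _)
  have hFm : Measurable F := hFσ.mono hσT_le le_rfl
  -- dyadic approximations from above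
  set d : ℕ → Ω → (Fin n → ℤ) := fun m ω j => ⌈(2^m : ℝ) * max (T t ω j) 0⌉ with hd
  set v : ℕ → (Fin n → ℤ) → (Fin n → ℝ) := fun m z j => (z j : ℝ) / 2^m with hv
  have h2pos : ∀ m : ℕ, (0:ℝ) < 2^m := fun m => pow_pos two_pos m
  have hq_ge : ∀ (m : ℕ) ω j, max (T t ω j) 0 ≤ v m (d m ω) j := by
    intro m ω j
    simp only [hv, hd]
    rw [le_div_iff₀ (h2pos m)]
    calc max (T t ω j) 0 * 2^m = 2^m * max (T t ω j) 0 := mul_comm _ _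
      _ ≤ ⌈(2^m : ℝ) * max (T t ω j) 0⌉ := Int.le_ceil _
  have hq_le : ∀ (m : ℕ) ω j, v m (d m ω) j ≤ max (T t ω j) 0 + (2⁻¹ : ℝ)^m := by
    intro m ω j
    simp only [hv, hd]
    rw [div_le_iff₀ (h2pos m)]
    calc ((⌈(2^m : ℝ) * max (T t ω j) 0⌉ : ℤ) : ℝ)
        ≤ 2^m * max (T t ω j) 0 + 1 := (Int.ceil_lt_add_one _).le
      _ = (max (T t ω j) 0 + (2⁻¹:ℝ)^m) * 2^m := by
          rw [add_mul, inv_pow, inv_mul_cancel₀ (ne_of_gt (h2pos m))]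
          ring
  have hq0 : ∀ (m : ℕ) ω j, 0 ≤ v m (d m ω) j :=
    fun m ω j => le_trans (le_max_right _ _) (hq_ge m ω j)
  have hdσ : ∀ m, Measurable[processSigma T] (d m) := by
    intro m
    letI : MeasurableSpace Ω := processSigma T
    apply measurable_pi_lambda
    intro j
    exact Int.measurable_ceil.comp
      ((((measurable_pi_apply j).comp hTtσ).max measurable_const).const_mul _)
  have hdm : ∀ m, Measurable (d m) := fun m => (hdσ m).mono hσT_le le_rfl
  have hcd : ∀ m, (Set.range (d m)).Countable := fun m => Set.to_countable _
  -- the key identity at each scale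
  have hkey : ∀ m : ℕ,
      ∫ ω, F ω * Complex.exp (Complex.I * ((∑ j, θ₂ j * X (v m (d m ω) j) ω j : ℝ) : ℂ)) ∂P
        = ∫ ω, F ω * Complex.exp (ordExpSorted (v m (d m ω)) Ψ θ₂) ∂P := by
    intro m
    refine discrete_identity X T Ψ hX hΨ hindep hTm F hFσ hFb (d m) (hdσ m) (v m) ?_ θ₂
    rintro z ⟨ω, rfl⟩ j
    exact hq0 m ω j
  -- measurability of the approximating integrands
  have hXq : ∀ (m : ℕ) (j : Fin n), Measurable fun ω => X (v m (d m ω) j) ω j := by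
    intro m j
    have hqj : Measurable fun ω => v m (d m ω) j :=
      measurable_comp_countable_range (hdm m) (hcd m) (fun z => v m z j)
    have hqrange : (Set.range fun ω => v m (d m ω) j).Countable := by
      refine ((hcd m).image (fun z => v m z j)).mono ?_
      rintro x ⟨ω, rfl⟩
      exact ⟨d m ω, ⟨ω, rfl⟩, rfl⟩
    exact measurable_eval_countable
      (fun u => (measurable_pi_apply j).comp (hX.1 u)) hqj hqrange
  have hLm : ∀ m : ℕ, Measurable fun ω =>
      F ω * Complex.exp (Complex.I * ((∑ j, θ₂ j * X (v m (d m ω) j) ω j : ℝ) : ℂ)) := by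
    intro m
    apply hFm.mul
    apply Complex.measurable_exp.comp
    apply Measurable.const_mul
    apply Complex.measurable_ofReal.comp
    exact Finset.measurable_sum _ (fun j _ => Measurable.const_mul (hXq m j) (θ₂ j))
  have hRm : ∀ m : ℕ, Measurable fun ω =>
      F ω * Complex.exp (ordExpSorted (v m (d m ω)) Ψ θ₂) := by
    intro m
    apply hFm.mul
    exact measurable_comp_countable_range (m := ‹MeasurableSpace Ω›) (hdm m) (hcd m)
      (fun z => Complex.exp (ordExpSorted (v m z) Ψ θ₂))
  -- convergence of the approximating times
  have hqtend : ∀ ω, (∀ j, 0 ≤ T t ω j) →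
      ∀ j, Tendsto (fun m => v m (d m ω) j) atTop (𝓝 (T t ω j)) := by
    intro ω hω j
    have hmax : max (T t ω j) 0 = T t ω j := max_eq_left (hω j)
    have hhalf : Tendsto (fun m : ℕ => (2⁻¹:ℝ)^m) atTop (𝓝 0) :=
      tendsto_pow_atTop_nhds_zero_of_lt_one (by norm_num) (by norm_num)
    refine tendsto_of_tendsto_of_tendsto_of_le_of_le
      (g := fun _ : ℕ => T t ω j) (h := fun m : ℕ => T t ω j + (2⁻¹:ℝ)^m)
      tendsto_const_nhds (by simpa using tendsto_const_nhds.add hhalf) ?_ ?_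
    · intro m
      have := hq_ge m ω j
      rwa [hmax] at this
    · intro m
      have := hq_le m ω j
      rwa [hmax] at this
  -- convergence of the left-hand side
  have hLtend : Tendsto (fun m => ∫ ω,
      F ω * Complex.exp (Complex.I * ((∑ j, θ₂ j * X (v m (d m ω) j) ω j : ℝ) : ℂ)) ∂P) atTop
      (𝓝 (∫ ω, F ω * Complex.exp (Complex.I * ((∑ j, θ₂ j * X (T t ω j) ω j : ℝ) : ℂ)) ∂P)) := by
    apply tendsto_integral_of_dominated_convergence (fun _ => (1:ℝ))
    · exact fun m => (hLm m).aestronglyMeasurable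
    · exact integrable_const 1
    · intro m
      refine Eventually.of_forall fun ω => ?_
      calc ‖F ω * Complex.exp (Complex.I * ((∑ j, θ₂ j * X (v m (d m ω) j) ω j : ℝ) : ℂ))‖
          = ‖F ω‖ * ‖Complex.exp (Complex.I * ((∑ j, θ₂ j * X (v m (d m ω) j) ω j : ℝ) : ℂ))‖ :=
            norm_mul _ _
        _ ≤ 1 * 1 := mul_le_mul (hFb ω) (le_of_eq (norm_exp_I_mul_real _))
            (norm_nonneg _) zero_le_one
        _ = 1 := one_mul 1
    · filter_upwards [hTprop, hX.2.2.2.2] with ω hTω hcad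
      have hu : ∀ j, 0 ≤ T t ω j := fun j => (hTω j).1 t ht
      have hqt := hqtend ω hu
      have hXt : ∀ j, Tendsto (fun m => X (v m (d m ω) j) ω j) atTop (𝓝 (X (T t ω j) ω j)) := by
        intro j
        have hcw : ContinuousWithinAt (fun r => X r ω j) (Ici (T t ω j)) (T t ω j) :=
          (continuous_apply j).continuousAt.comp_continuousWithinAt (hcad.1 (T t ω j) (hu j))
        apply hcw.tendsto.comp
        rw [tendsto_nhdsWithin_iff]
        refine ⟨hqt j, Eventually.of_forall fun m => ?_⟩
        have := hq_ge m ω j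
        rw [max_eq_left (hu j)] at this
        exact this
      have h1 : Tendsto (fun m => (∑ j, θ₂ j * X (v m (d m ω) j) ω j : ℝ)) atTop
          (𝓝 (∑ j, θ₂ j * X (T t ω j) ω j)) :=
        tendsto_finset_sum _ fun j _ => (hXt j).const_mul (θ₂ j)
      have h2 := ((Complex.continuous_ofReal.tendsto _).comp h1).const_mul Complex.I
      exact ((Complex.continuous_exp.tendsto _).comp h2).const_mul (F ω)
  -- convergence of the right-hand side
  have hRtend : Tendsto (fun m => ∫ ω,
      F ω * Complex.exp (ordExpSorted (v m (d m ω)) Ψ θ₂) ∂P) atTop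
      (𝓝 (∫ ω, F ω * Complex.exp (ordExpSorted (T t ω) Ψ θ₂) ∂P)) := by
    apply tendsto_integral_of_dominated_convergence (fun _ => (1:ℝ))
    · exact fun m => (hRm m).aestronglyMeasurable
    · exact integrable_const 1
    · intro m
      refine Eventually.of_forall fun ω => ?_
      have h2 : ‖Complex.exp (ordExpSorted (v m (d m ω)) Ψ θ₂)‖ ≤ 1 := by
        rw [Complex.norm_exp, Real.exp_le_one_iff]
        exact re_ordExpSorted_nonpos θ₂ (rePsi_nonpos hΨ) _ (fun j => hq0 m ω j)
      calc ‖F ω * Complex.exp (ordExpSorted (v m (d m ω)) Ψ θ₂)‖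
          = ‖F ω‖ * ‖Complex.exp (ordExpSorted (v m (d m ω)) Ψ θ₂)‖ := norm_mul _ _
        _ ≤ 1 * 1 := mul_le_mul (hFb ω) h2 (norm_nonneg _) zero_le_one
        _ = 1 := one_mul 1
    · filter_upwards [hTprop] with ω hTω
      have hu : ∀ j, 0 ≤ T t ω j := fun j => (hTω j).1 t ht
      have hqt := hqtend ω hu
      set σ₀ := Tuple.sort (T t ω) with hσ₀
      have hqsort : ∀ m, Monotone ((v m (d m ω)) ∘ σ₀) := by
        intro m i i' hii'
        have hTs : T t ω (σ₀ i) ≤ T t ω (σ₀ i') := Tuple.monotone_sort (T t ω) hii'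
        show v m (d m ω) (σ₀ i) ≤ v m (d m ω) (σ₀ i')
        have hc : d m ω (σ₀ i) ≤ d m ω (σ₀ i') := by
          simp only [hd]
          exact Int.ceil_le_ceil
            (mul_le_mul_of_nonneg_left (max_le_max hTs le_rfl) (h2pos m).le)
        simp only [hv]
        gcongr

      have hordt : Tendsto (fun m => ordExp σ₀ (v m (d m ω)) Ψ θ₂) atTop
          (𝓝 (ordExp σ₀ (T t ω) Ψ θ₂)) := by
        simp only [ordExp]
        apply tendsto_finset_sum
        intro k _
        refine Tendsto.mul_const _ ?_
        by_cases hk : (k : ℕ) = 0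
        · simp only [dif_pos hk]
          exact ((Complex.continuous_ofReal.tendsto _).comp (hqt (σ₀ k))).sub tendsto_const_nhds
        · simp only [dif_neg hk]
          exact ((Complex.continuous_ofReal.tendsto _).comp (hqt (σ₀ k))).sub
            ((Complex.continuous_ofReal.tendsto _).comp (hqt (σ₀ _)))
      have heq : ∀ m, F ω * Complex.exp (ordExp σ₀ (v m (d m ω)) Ψ θ₂)
          = F ω * Complex.exp (ordExpSorted (v m (d m ω)) Ψ θ₂) := fun m => by
        rw [ordExpSorted_eq_ordExp Ψ θ₂ _ (fun j => hq0 m ω j) σ₀ (hqsort m)]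
      have hfinal : Tendsto (fun m => F ω * Complex.exp (ordExp σ₀ (v m (d m ω)) Ψ θ₂)) atTop
          (𝓝 (F ω * Complex.exp (ordExp σ₀ (T t ω) Ψ θ₂))) :=
        ((Complex.continuous_exp.tendsto _).comp hordt).const_mul (F ω)
      rw [show ordExpSorted (T t ω) Ψ θ₂ = ordExp σ₀ (T t ω) Ψ θ₂ from rfl]
      exact hfinal.congr heq
  -- conclude
  have hseq : (fun m => ∫ ω,
      F ω * Complex.exp (Complex.I * ((∑ j, θ₂ j * X (v m (d m ω) j) ω j : ℝ) : ℂ)) ∂P)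
      = fun m => ∫ ω, F ω * Complex.exp (ordExpSorted (v m (d m ω)) Ψ θ₂) ∂P :=
    funext hkey
  rw [hseq] at hLtend
  exact tendsto_nhds_unique hLtend hRtend

end
end

section
/- Let n₁,…,n_d ≥ 1 with n = n₁+…+n_d, and let J_m = {n₁+…+n_{m−1}+1, …, n₁+…+n_m} be the m-th block of indices in {1,…,n}. Let ψ_m : ℝ^{n_m} → ℂ satisfy ψ_m(0) = 0 for each 1 ≤ m ≤ d, and define Ψ : ℝ^n → ℂ by Ψ(θ) := Σ_{m=1}^d ψ_m(θ|_{J_m}), where θ|_{J_m} ∈ ℝ^{n_m} denotes the restriction of θ to the coordinates in J_m. Let r ∈ [0,∞)^d and define t ∈ [0,∞)^n by t_j := r_m for j ∈ J_m. Then for every permutation σ of {1,…,n} with t_{σ(1)} ≤ … ≤ t_{σ(n)}, one has (t ▸ Ψ)_σ(θ) = Σ_{m=1}^d r_m ψ_m(θ|_{J_m}) for all θ ∈ ℝ^n. -/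
open MeasureTheory ProbabilityTheory Filter Set

noncomputable section

private lemma sum_Iic_fin_eq_sum_range {N : ℕ} (K : Fin N) (F : ℕ → ℂ) :
    ∑ k ∈ Finset.Iic K, F (k : ℕ) = ∑ i ∈ Finset.range ((K : ℕ) + 1), F i := by
  refine Finset.sum_nbij' (fun k => (k : ℕ))
    (fun i => ⟨min i (K : ℕ), lt_of_le_of_lt (min_le_right _ _) K.isLt⟩) ?_ ?_ ?_ ?_ ?_
  · intro a ha
    simp only [Finset.mem_Iic] at ha
    simp only [Finset.mem_range]
    omega
  · intro a ha
    simp only [Finset.mem_range] at ha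
    simp only [Finset.mem_Iic, Fin.le_def]
    simp
  · intro a ha
    simp only [Finset.mem_Iic, Fin.le_def] at ha
    ext
    simp [Nat.min_eq_left ha]
  · intro a ha
    simp only [Finset.mem_range] at ha
    simp [Nat.min_eq_left (by omega : a ≤ (K:ℕ))]
  · intro a ha
    rfl

private lemma fin_telescope {N : ℕ} (a : Fin N → ℂ) (K : Fin N) :
    (∑ k ∈ Finset.Iic K, (a k - if hk : (k : ℕ) = 0 then 0
        else a ⟨(k : ℕ) - 1, by have := k.isLt; omega⟩)) = a K := by
  classical
  set G : ℕ → ℂ := fun i => if h : i - 1 < N ∧ 0 < i then a ⟨i - 1, h.1⟩ else 0 with hG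
  have hsum : ∀ k : Fin N,
      (a k - if hk : (k : ℕ) = 0 then 0
        else a ⟨(k : ℕ) - 1, by have := k.isLt; omega⟩) = G ((k : ℕ) + 1) - G (k : ℕ) := by
    intro k
    have h1 : G ((k : ℕ) + 1) = a k := by
      simp only [hG]; rw [dif_pos ⟨by simpa using k.isLt, Nat.succ_pos _⟩]
      congr 1
    rw [h1]
    by_cases hk : (k : ℕ) = 0
    · rw [dif_pos hk]
      simp only [hG]
      rw [dif_neg (by omega : ¬((k:ℕ) - 1 < N ∧ 0 < (k:ℕ)))]
    · rw [dif_neg hk]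
      simp only [hG]
      rw [dif_pos ⟨by have := k.isLt; omega, by omega⟩]
  rw [Finset.sum_congr rfl (fun k _ => hsum k)]
  rw [sum_Iic_fin_eq_sum_range K (fun i => G (i + 1) - G i)]
  rw [Finset.sum_range_sub]
  have h0 : G 0 = 0 := by simp only [hG]; rw [dif_neg (by omega)]
  rw [h0, sub_zero]
  simp only [hG]
  rw [dif_pos ⟨by simpa using K.isLt, Nat.succ_pos _⟩]
  congr 1


/-- for a stacked exponent `Ψ(θ) = ∑ₘ ψₘ(θ|_{Jₘ})` with `ψₘ(0) = 0`, and a time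
vector `t` that is constant on each block `Jₘ` with value `rₘ ≥ 0`, the ordered exponent is
`(t ▸ Ψ)_σ(θ) = ∑ₘ rₘ ψₘ(θ|_{Jₘ})`, for any sorting permutation `σ`. -/
theorem ordExp_stacked {d : ℕ} (n : Fin d → ℕ) (hn : ∀ m, 1 ≤ n m)
    (ψ : ∀ m : Fin d, (Fin (n m) → ℝ) → ℂ) (hψ0 : ∀ m, ψ m 0 = 0)
    (Ψ : ((Σ m : Fin d, Fin (n m)) → ℝ) → ℂ)
    (hΨ : ∀ θ : (Σ m : Fin d, Fin (n m)) → ℝ, Ψ θ = ∑ m : Fin d, ψ m (fun j => θ ⟨m, j⟩))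
    (r : Fin d → ℝ) (hr : ∀ m, 0 ≤ r m)
    (t : (Σ m : Fin d, Fin (n m)) → ℝ) (ht : ∀ p : Σ m : Fin d, Fin (n m), t p = r p.1)
    (N : ℕ) (σ : Fin N ≃ (Σ m : Fin d, Fin (n m)))
    (hσ : Monotone fun k => t (σ k)) (θ : (Σ m : Fin d, Fin (n m)) → ℝ) :
    ordExp σ t Ψ θ = ∑ m : Fin d, (r m : ℂ) * ψ m (fun j => θ ⟨m, j⟩) := by
  classical
  have hposne : ∀ m : Fin d,
      (Finset.univ.image (fun j : Fin (n m) => σ.symm ⟨m, j⟩)).Nonempty :=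
    fun m => ⟨σ.symm ⟨m, ⟨0, hn m⟩⟩, Finset.mem_image_of_mem _ (Finset.mem_univ _)⟩
  set K : Fin d → Fin N :=
    fun m => (Finset.univ.image (fun j : Fin (n m) => σ.symm ⟨m, j⟩)).min' (hposne m) with hKdef
  have hKmem : ∀ m, ∃ j : Fin (n m), σ.symm ⟨m, j⟩ = K m := by
    intro m
    have h := Finset.min'_mem _ (hposne m)
    rw [Finset.mem_image] at h
    obtain ⟨j, _, hj⟩ := h
    exact ⟨j, hj⟩
  have hKle : ∀ (m : Fin d) (j : Fin (n m)), K m ≤ σ.symm ⟨m, j⟩ :=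
    fun m j => Finset.min'_le _ _ (Finset.mem_image_of_mem _ (Finset.mem_univ j))
  have htK : ∀ m, t (σ (K m)) = r m := by
    intro m
    obtain ⟨j, hj⟩ := hKmem m
    rw [← hj, Equiv.apply_symm_apply, ht]
  unfold ordExp
  simp only [hΨ, Finset.mul_sum]
  rw [Finset.sum_comm]
  refine Finset.sum_congr rfl (fun m _ => ?_)
  have hterm : ∀ k : Fin N,
      (((t (σ k) : ℝ) : ℂ) -
          if hk : (k : ℕ) = 0 then 0
          else ((t (σ ⟨(k : ℕ) - 1, by have := k.isLt; omega⟩) : ℝ) : ℂ)) *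
        ψ m (fun j => ({j' : Σ m', Fin (n m') | ∃ m' : Fin N, k ≤ m' ∧ σ m' = j'}.indicator θ)
          ⟨m, j⟩)
      = if k ≤ K m then
          (((t (σ k) : ℝ) : ℂ) -
            if hk : (k : ℕ) = 0 then 0
            else ((t (σ ⟨(k : ℕ) - 1, by have := k.isLt; omega⟩) : ℝ) : ℂ)) *
          ψ m (fun j => θ ⟨m, j⟩)
        else 0 := by
    intro k
    by_cases hk : k ≤ K m
    · rw [if_pos hk]
      congr 1
      congr 1
      funext j
      refine Set.indicator_of_mem ?_ θ
      exact ⟨σ.symm ⟨m, j⟩, le_trans hk (hKle m j), Equiv.apply_symm_apply σ _⟩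
    · rw [if_neg hk]
      by_cases h0 : (fun j => ({j' : Σ m', Fin (n m') | ∃ m' : Fin N, k ≤ m' ∧ σ m' = j'}.indicator θ)
          ⟨m, j⟩) = (0 : Fin (n m) → ℝ)
      · rw [h0, hψ0, mul_zero]
      · obtain ⟨j, hj⟩ := Function.ne_iff.mp h0
        have hmem : (⟨m, j⟩ : Σ m', Fin (n m')) ∈
            {j' : Σ m', Fin (n m') | ∃ m' : Fin N, k ≤ m' ∧ σ m' = j'} := by
          by_contra hc
          exact hj (Set.indicator_of_notMem hc θ)
        obtain ⟨m', hkm', hσm'⟩ := hmem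
        push_neg at hk
        have hKk : (K m : ℕ) < (k : ℕ) := hk
        have hk0 : ¬ ((k : ℕ) = 0) := by omega
        rw [dif_neg hk0]
        have hpred : (⟨(k : ℕ) - 1, by have := k.isLt; omega⟩ : Fin N) ≤ k := by
          rw [Fin.le_def]; exact Nat.sub_le _ _
        have hKpred : K m ≤ (⟨(k : ℕ) - 1, by have := k.isLt; omega⟩ : Fin N) := by
          rw [Fin.le_def]; show (K m : ℕ) ≤ (k : ℕ) - 1; omega
        have htm' : t (σ m') = r m := by rw [hσm', ht]
        have e1 : t (σ k) = r m :=
          le_antisymm (htm' ▸ hσ hkm') (htK m ▸ hσ (le_trans hKpred hpred))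
        have e2 : t (σ (⟨(k : ℕ) - 1, by have := k.isLt; omega⟩ : Fin N)) = r m :=
          le_antisymm (e1 ▸ hσ hpred) (htK m ▸ hσ hKpred)
        rw [e1, e2, sub_self, zero_mul]
  rw [Finset.sum_congr rfl (fun k _ => hterm k)]
  rw [← Finset.sum_filter]
  have hfil : Finset.univ.filter (fun k : Fin N => k ≤ K m) = Finset.Iic (K m) := by
    ext k; simp
  rw [hfil, ← Finset.sum_mul]
  rw [fin_telescope (fun k : Fin N => ((t (σ k) : ℝ) : ℂ)) (K m)]
  rw [htK m]


end
end

section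
/- Let X be an n-dimensional Lévy process with characteristic exponent Ψ. Then for every fixed t = (t₁,…,tₙ) ∈ [0,∞)^n, every θ = (θ₁,…,θₙ) ∈ ℝ^n, and every permutation σ of {1,…,n} with t_{σ(1)} ≤ … ≤ t_{σ(n)}, the random vector X(t) := (X₁(t₁), …, Xₙ(tₙ)) satisfies E[ exp( i Σ_{k=1}^n θ_k X_k(t_k) ) ] = exp( (t ▸ Ψ)_σ(θ) ). In particular, X(t) is infinitely divisible with characteristic exponent (t ▸ Ψ)(θ). -/
open MeasureTheory ProbabilityTheory Filter Set

noncomputable section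

lemma indepFun_integral_mul_complex {Ω : Type*} [MeasurableSpace Ω] {P : Measure Ω}
    [IsFiniteMeasure P] {U V : Ω → ℂ}
    (h : IndepFun U V P) (hU : AEMeasurable U P) (hV : AEMeasurable V P) :
    ∫ ω, U ω * V ω ∂P = (∫ ω, U ω ∂P) * ∫ ω, V ω ∂P := by
  rw [indepFun_iff_map_prod_eq_prod_map_map hU hV] at h
  have hUV : AEMeasurable (fun ω => (U ω, V ω)) P := hU.prodMk hV
  have hfin : IsFiniteMeasure (P.map V) :=
    ⟨by rw [Measure.map_apply_of_aemeasurable hV MeasurableSet.univ]; exact measure_lt_top P _⟩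
  calc ∫ ω, U ω * V ω ∂P
      = ∫ z : ℂ × ℂ, z.1 * z.2 ∂(P.map fun ω => (U ω, V ω)) := by
        rw [integral_map (f := fun z : ℂ × ℂ => z.1 * z.2) hUV (measurable_fst.mul measurable_snd).aestronglyMeasurable]
    _ = ∫ z : ℂ × ℂ, z.1 * z.2 ∂((P.map U).prod (P.map V)) := by rw [h]
    _ = (∫ z, z ∂(P.map U)) * ∫ z, z ∂(P.map V) :=
        integral_prod_mul (fun z : ℂ => z) (fun z : ℂ => z)
    _ = (∫ ω, U ω ∂P) * ∫ ω, V ω ∂P := by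
        congr 1
        · exact integral_map hU (f := fun z : ℂ => z) measurable_id'.aestronglyMeasurable
        · exact integral_map hV (f := fun z : ℂ => z) measurable_id'.aestronglyMeasurable

lemma iIndep_integral_prod_complex {Ω : Type*} [MeasurableSpace Ω] {P : Measure Ω}
    [IsProbabilityMeasure P] {ι E : Type*} [MeasurableSpace E] {Z : ι → Ω → E}
    (hZ : ∀ i, Measurable (Z i))
    (hind : iIndepFun Z P)
    (g : ι → E → ℂ) (hg : ∀ i, Measurable (g i)) (S : Finset ι) :
    ∫ ω, ∏ i ∈ S, g i (Z i ω) ∂P = ∏ i ∈ S, ∫ ω, g i (Z i ω) ∂P := by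
  classical
  induction S using Finset.cons_induction with
  | empty => simp
  | cons j S hj ih =>
    have h1 : IndepFun (fun a (i : ({j} : Finset ι)) => Z i a)
        (fun a (i : S) => Z i a) P :=
      hind.indepFun_finset {j} S (by simpa using hj) hZ
    have hIF : IndepFun (fun ω => g j (Z j ω)) (fun ω => ∏ i ∈ S, g i (Z i ω)) P := by
      have h2 := h1.comp
        (φ := fun v : ({x // x ∈ ({j} : Finset ι)} → E) => g j (v ⟨j, Finset.mem_singleton_self j⟩))
        (ψ := fun v : ({x // x ∈ S} → E) => ∏ i : {x // x ∈ S}, g i.1 (v i))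
        ((hg j).comp (measurable_pi_apply _))
        (Finset.measurable_prod Finset.univ fun i _ => (hg i.1).comp (measurable_pi_apply _))
      have he : (fun ω => ∏ i : {x // x ∈ S}, g i.1 (Z i.1 ω)) = fun ω => ∏ i ∈ S, g i (Z i ω) := by
        funext ω; exact Finset.prod_coe_sort S (fun i => g i (Z i ω))
      exact he ▸ h2
    have hmeas1 : Measurable fun ω => g j (Z j ω) := (hg j).comp (hZ j)
    have hmeas2 : Measurable fun ω => ∏ i ∈ S, g i (Z i ω) :=
      Finset.measurable_prod S fun i _ => (hg i).comp (hZ i)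
    calc ∫ ω, ∏ i ∈ Finset.cons j S hj, g i (Z i ω) ∂P
        = ∫ ω, g j (Z j ω) * ∏ i ∈ S, g i (Z i ω) ∂P := by
          simp only [Finset.prod_cons]
      _ = (∫ ω, g j (Z j ω) ∂P) * ∫ ω, ∏ i ∈ S, g i (Z i ω) ∂P :=
          indepFun_integral_mul_complex hIF hmeas1.aemeasurable hmeas2.aemeasurable
      _ = ∏ i ∈ Finset.cons j S hj, ∫ ω, g i (Z i ω) ∂P := by
          rw [ih, Finset.prod_cons]


/-- for a Lévy process `X` with characteristic exponent `Ψ`, the random vector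
`X(t) = (X₁(t₁), …, Xₙ(tₙ))`, `t ∈ [0,∞)ⁿ`, has characteristic function
`E[exp(i ∑ₖ θₖ Xₖ(tₖ))] = exp((t ▸ Ψ)_σ(θ))` for any sorting permutation `σ` of `t`. -/
theorem charFun_levy_multivariate_time {Ω : Type*} [MeasurableSpace Ω]
    (P : Measure Ω) [IsProbabilityMeasure P] {n : ℕ}
    (X : ℝ → Ω → (Fin n → ℝ)) (Ψ : (Fin n → ℝ) → ℂ)
    (hX : IsLevyProcess P X) (hΨ : IsCharExponent P X Ψ)
    (t : Fin n → ℝ) (ht : ∀ k, 0 ≤ t k) (θ : Fin n → ℝ)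
    (σ : Equiv.Perm (Fin n)) (hσ : Monotone fun k => t (σ k)) :
    ∫ ω, Complex.exp (Complex.I * ((∑ k, θ k * X (t k) ω k : ℝ) : ℂ)) ∂P
      = Complex.exp (ordExp σ t Ψ θ) := by
  classical
  obtain ⟨hXm, hX0, hXi, hXs, -⟩ := hX
  -- the ordered times, with `0` prepended
  set u : Fin (n + 1) → ℝ := fun k =>
    if h : (k : ℕ) = 0 then 0 else t (σ ⟨(k : ℕ) - 1, by have := k.isLt; omega⟩) with hu
  have hu0 : u 0 = 0 := by simp [hu]
  have husucc : ∀ i : Fin n, u i.succ = t (σ i) := by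
    intro i
    simp only [hu, Fin.val_succ, Nat.add_sub_cancel, Nat.succ_ne_zero, dif_neg,
      not_false_iff]
  have humono : Monotone u := by
    intro a b hab
    have hab' : (a : ℕ) ≤ (b : ℕ) := hab
    by_cases ha : (a : ℕ) = 0
    · rw [hu]; simp only [ha, dif_pos]
      by_cases hb : (b : ℕ) = 0
      · simp [hb]
      · simp only [hb, dif_neg, not_false_iff]; exact ht _
    · have hb : (b : ℕ) ≠ 0 := by omega
      rw [hu]; simp only [ha, hb, dif_neg, not_false_iff]
      exact hσ (by simp only [Fin.mk_le_mk]; omega)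
  -- the increments
  set Z : Fin n → Ω → (Fin n → ℝ) :=
    fun i ω => X (u i.succ) ω - X (u i.castSucc) ω with hZdef
  have hZm : ∀ i, Measurable (Z i) := fun i => (hXm _).sub (hXm _)
  have hind : iIndepFun Z P := hXi n u hu0 humono
  -- the frequency vectors
  set η : Fin n → Fin n → ℝ :=
    fun i => ({j : Fin n | ∃ m : Fin n, i ≤ m ∧ σ m = j}).indicator θ with hη
  set g : Fin n → (Fin n → ℝ) → ℂ :=
    fun i x => Complex.exp (Complex.I * ((∑ j, η i j * x j : ℝ) : ℂ)) with hg
  have hgm : ∀ i, Measurable (g i) := by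
    intro i
    apply Measurable.cexp
    exact (Complex.measurable_ofReal.comp
      (Finset.measurable_sum Finset.univ fun j _ =>
        (measurable_pi_apply j).const_mul _)).const_mul _
  -- telescoping
  have tele : ∀ ω, X 0 ω = 0 → ∀ m : Fin (n + 1),
      X (u m) ω = ∑ i ∈ Finset.univ.filter (fun i : Fin n => (i : ℕ) < (m : ℕ)), Z i ω := by
    intro ω h0 m
    induction m using Fin.induction with
    | zero =>
      have : Finset.univ.filter (fun i : Fin n => (i : ℕ) < ((0 : Fin (n+1)) : ℕ)) = ∅ := by
        ext i; simp
      rw [hu0, this, Finset.sum_empty, h0]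
    | succ i ih =>
      have hstep : X (u i.succ) ω = X (u i.castSucc) ω + Z i ω := by
        funext j; simp [hZdef]
      have hfil : Finset.univ.filter (fun i' : Fin n => (i' : ℕ) < ((i.succ : Fin (n+1)) : ℕ))
          = insert i (Finset.univ.filter (fun i' : Fin n => (i' : ℕ) < ((i.castSucc : Fin (n+1)) : ℕ))) := by
        ext i'
        simp only [Finset.mem_filter, Finset.mem_univ, true_and, Finset.mem_insert,
          Fin.val_succ, Fin.coe_castSucc, Nat.lt_succ_iff_lt_or_eq]
        constructor
        · rintro (h | h)
          · exact Or.inr h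
          · exact Or.inl (Fin.ext h)
        · rintro (h | h)
          · exact Or.inr (by rw [h])
          · exact Or.inl h
      have hnot : i ∉ Finset.univ.filter
          (fun i' : Fin n => (i' : ℕ) < ((i.castSucc : Fin (n+1)) : ℕ)) := by
        simp
      rw [hstep, ih, hfil, Finset.sum_insert hnot]
      exact add_comm _ _
  -- the key a.e. identity for the exponent
  have key : ∀ᵐ ω ∂P,
      (∑ k, θ k * X (t k) ω k : ℝ) = ∑ i : Fin n, ∑ j : Fin n, η i j * Z i ω j := by
    filter_upwards [hX0] with ω h0
    have hXt : ∀ j : Fin n, X (t j) ω j =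
        ∑ i ∈ Finset.univ.filter (fun i : Fin n => (i : ℕ) ≤ ((σ⁻¹ j : Fin n) : ℕ)), Z i ω j := by
      intro j
      have h1 : t j = u ((σ⁻¹ j : Fin n).succ) := by
        rw [husucc]; simp
      have h2 : Finset.univ.filter
            (fun i : Fin n => (i : ℕ) < (((σ⁻¹ j : Fin n).succ : Fin (n+1)) : ℕ))
          = Finset.univ.filter (fun i : Fin n => (i : ℕ) ≤ ((σ⁻¹ j : Fin n) : ℕ)) := by
        ext i; simp [Fin.val_succ, Nat.lt_succ_iff]
      rw [h1, tele ω h0, h2, Finset.sum_apply]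
    calc (∑ k, θ k * X (t k) ω k : ℝ)
        = ∑ j, ∑ i ∈ Finset.univ.filter
            (fun i : Fin n => (i : ℕ) ≤ ((σ⁻¹ j : Fin n) : ℕ)), θ j * Z i ω j := by
          refine Finset.sum_congr rfl fun j _ => ?_
          rw [hXt j, Finset.mul_sum]
      _ = ∑ j, ∑ i : Fin n,
            if (i : ℕ) ≤ ((σ⁻¹ j : Fin n) : ℕ) then θ j * Z i ω j else 0 := by
          refine Finset.sum_congr rfl fun j _ => ?_
          rw [Finset.sum_filter]
      _ = ∑ i : Fin n, ∑ j : Fin n,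
            if (i : ℕ) ≤ ((σ⁻¹ j : Fin n) : ℕ) then θ j * Z i ω j else 0 := Finset.sum_comm
      _ = ∑ i : Fin n, ∑ j : Fin n, η i j * Z i ω j := by
          refine Finset.sum_congr rfl fun i _ => Finset.sum_congr rfl fun j _ => ?_
          have hiff : (j ∈ {j : Fin n | ∃ m : Fin n, i ≤ m ∧ σ m = j})
              ↔ ((i : ℕ) ≤ ((σ⁻¹ j : Fin n) : ℕ)) := by
            constructor
            · rintro ⟨m, him, hm⟩
              have : σ⁻¹ j = m := by rw [← hm]; simp
              rw [this]; exact him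
            · intro h
              exact ⟨σ⁻¹ j, h, σ.apply_symm_apply j⟩
          rw [hη]
          simp only [Set.indicator_apply, hiff]
          by_cases h : (i : ℕ) ≤ ((σ⁻¹ j : Fin n) : ℕ) <;> simp [h]
  -- distances between consecutive times
  have hd : ∀ i : Fin n, 0 ≤ u i.succ - u i.castSucc := by
    intro i
    have := humono (show i.castSucc ≤ i.succ from le_of_lt (Fin.castSucc_lt_succ (i := i)))
    linarith
  -- each factor
  have hfactor : ∀ i : Fin n,
      ∫ ω, g i (Z i ω) ∂P = Complex.exp (((u i.succ - u i.castSucc : ℝ) : ℂ) * Ψ (η i)) := by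
    intro i
    have h0le : (0 : ℝ) ≤ u i.castSucc := by
      have := humono (show (0 : Fin (n+1)) ≤ i.castSucc from Fin.zero_le _)
      rw [hu0] at this; exact this
    have hmap : P.map (Z i) = P.map (X (u i.succ - u i.castSucc)) := by
      have := hXs (u i.castSucc) (u i.succ - u i.castSucc) h0le (hd i)
      rw [hZdef]
      have harg : u i.castSucc + (u i.succ - u i.castSucc) = u i.succ := by ring
      rw [harg] at this
      exact this
    calc ∫ ω, g i (Z i ω) ∂P
        = ∫ x, g i x ∂(P.map (Z i)) :=
          (integral_map (hZm i).aemeasurable (hgm i).aestronglyMeasurable).symm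
      _ = ∫ x, g i x ∂(P.map (X (u i.succ - u i.castSucc))) := by rw [hmap]
      _ = ∫ ω, g i (X (u i.succ - u i.castSucc) ω) ∂P :=
          integral_map (hXm _).aemeasurable (hgm i).aestronglyMeasurable
      _ = Complex.exp (((u i.succ - u i.castSucc : ℝ) : ℂ) * Ψ (η i)) :=
          hΨ _ (hd i) (η i)
  -- put everything together
  calc ∫ ω, Complex.exp (Complex.I * ((∑ k, θ k * X (t k) ω k : ℝ) : ℂ)) ∂P
      = ∫ ω, ∏ i : Fin n, g i (Z i ω) ∂P := by
        refine integral_congr_ae (key.mono fun ω hω => ?_)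
        dsimp only
        rw [hω]
        rw [hg]
        simp only
        rw [← Complex.exp_sum]
        congr 1
        rw [Complex.ofReal_sum, Finset.mul_sum]
    _ = ∏ i : Fin n, ∫ ω, g i (Z i ω) ∂P :=
        iIndep_integral_prod_complex hZm hind g hgm Finset.univ
    _ = ∏ i : Fin n, Complex.exp (((u i.succ - u i.castSucc : ℝ) : ℂ) * Ψ (η i)) := by
        exact Finset.prod_congr rfl fun i _ => hfactor i
    _ = Complex.exp (∑ i : Fin n, ((u i.succ - u i.castSucc : ℝ) : ℂ) * Ψ (η i)) :=
        (Complex.exp_sum _ _).symm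
    _ = Complex.exp (ordExp σ t Ψ θ) := by
        congr 1
        unfold ordExp
        refine Finset.sum_congr rfl fun k _ => ?_
        have h1 : u k.succ = t (σ k) := husucc k
        have h2 : ((u k.succ - u k.castSucc : ℝ) : ℂ)
            = ((t (σ k) : ℝ) : ℂ) - ((u k.castSucc : ℝ) : ℂ) := by
          rw [Complex.ofReal_sub, h1]
        rw [h2]
        congr 1
        by_cases hk : (k : ℕ) = 0
        · rw [dif_pos hk]
          have : u k.castSucc = 0 := by
            rw [hu]; simp [Fin.coe_castSucc, hk]
          rw [this, Complex.ofReal_zero, sub_zero]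
        · rw [dif_neg hk]
          congr 2
          rw [hu]
          simp only [Fin.coe_castSucc, hk, dif_neg, not_false_iff]


end
end
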